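/- Let H0 be a self-adjoint operator, B a symmetric operator with D(H0) ⊆ D(B) such that H = H0 + B is self-adjoint on D(H0), and assume D = D^∞(H0) = D^∞(H). Then on L†(D) the locally convex topology defined by the seminorms A ↦ max{‖H0^k A f(H0)‖, ‖f(H0) A H0^k‖} (f ∈ F, k ∈ ℕ) and the locally convex topology defined by the seminorms A ↦ max{‖H^k A f(H)‖, ‖f(H) A H^k‖} (f ∈ F, k ∈ ℕ) are equivalent. -/

import Mathlib

open scoped ComplexInnerProductSpace

namespace Paper

/-- An unbounded linear operator in a Hilbert space `𝓗`, encoded by a distinguished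
domain together with a globally defined linear extension of its action. -/
structure Op (𝓗 : Type*) [NormedAddCommGroup 𝓗] [InnerProductSpace ℂ 𝓗] where
  dom : Submodule ℂ 𝓗
  op : 𝓗 →ₗ[ℂ] 𝓗

variable {𝓗 : Type*} [NormedAddCommGroup 𝓗] [InnerProductSpace ℂ 𝓗]

namespace Op

/-- `T.pw k` is the `k`-th power `T^k` of `T`, as a function. -/
def pw (T : Op 𝓗) (k : ℕ) : 𝓗 → 𝓗 := (fun x => T.op x)^[k]

/-- The domain `D(Tⁿ)` of the `n`-th power of `T`. -/
def domPow (T : Op 𝓗) : ℕ → Set 𝓗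
  | 0 => Set.univ
  | n + 1 => {x | x ∈ T.dom ∧ T.op x ∈ T.domPow n}

/-- The set of C^∞-vectors `D^∞(T) = ⋂ₙ D(Tⁿ)`. -/
def Dinf (T : Op 𝓗) : Set 𝓗 := ⋂ n : ℕ, T.domPow n

/-- `T` is symmetric. -/
def Symmetric (T : Op 𝓗) : Prop :=
  ∀ x ∈ T.dom, ∀ y ∈ T.dom, ⟪T.op x, y⟫ = ⟪x, T.op y⟫

/-- Self-adjointness: densely defined, symmetric, and every vector in the domain of the
adjoint already belongs to the domain (on which the adjoint acts as the operator). -/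
def IsSelfAdjoint (T : Op 𝓗) : Prop :=
  Dense (T.dom : Set 𝓗) ∧ T.Symmetric ∧
    ∀ y z : 𝓗, (∀ x ∈ T.dom, ⟪T.op x, y⟫ = ⟪x, z⟫) → y ∈ T.dom ∧ T.op y = z

/-- `T ≥ 1`. -/
def GeOne (T : Op 𝓗) : Prop := ∀ x ∈ T.dom, ‖x‖ ^ 2 ≤ (⟪T.op x, x⟫).re

/-- The perturbed operator `T + B`, with domain `D(T)`. -/
def pert (T B : Op 𝓗) : Op 𝓗 := ⟨T.dom, T.op + B.op⟩

/-- The graph topology `t_T` on a subset `D`, generated by the seminorms `φ ↦ ‖Tⁿφ‖`,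
i.e. the initial topology for the maps `φ ↦ Tⁿφ`. -/
def graphTopOn (T : Op 𝓗) (D : Set 𝓗) : TopologicalSpace D :=
  ⨅ n : ℕ, TopologicalSpace.induced (fun φ : D => T.pw n ↑φ) inferInstance

lemma pw_eq (T : Op 𝓗) (k : ℕ) (x : 𝓗) : T.pw k x = (T.op ^ k) x :=
  (Module.End.pow_apply _ _ _).symm

lemma pw_zero_app (T : Op 𝓗) (x : 𝓗) : T.pw 0 x = x := rfl

lemma pw_succ (T : Op 𝓗) (k : ℕ) (x : 𝓗) : T.pw (k+1) x = T.pw k (T.op x) :=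
  Function.iterate_succ_apply _ _ _

lemma pw_succ' (T : Op 𝓗) (k : ℕ) (x : 𝓗) : T.pw (k+1) x = T.op (T.pw k x) :=
  Function.iterate_succ_apply' _ _ _

lemma pw_add (T : Op 𝓗) (k : ℕ) (x y : 𝓗) : T.pw k (x + y) = T.pw k x + T.pw k y := by
  simp [pw_eq, map_add]

lemma pw_sub (T : Op 𝓗) (k : ℕ) (x y : 𝓗) : T.pw k (x - y) = T.pw k x - T.pw k y := by
  simp [pw_eq, map_sub]

lemma pw_smul (T : Op 𝓗) (k : ℕ) (a : ℂ) (x : 𝓗) : T.pw k (a • x) = a • T.pw k x := by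
  simp [pw_eq, map_smul]

lemma pw_zero' (T : Op 𝓗) (k : ℕ) : T.pw k 0 = 0 := by
  simp [pw_eq, map_zero]

lemma mem_dinf_iff {T : Op 𝓗} {x : 𝓗} : x ∈ T.Dinf ↔ ∀ n, x ∈ T.domPow n := by
  simp [Dinf]

lemma dinf_mem_dom {T : Op 𝓗} {x : 𝓗} (h : x ∈ T.Dinf) : x ∈ T.dom :=
  ((mem_dinf_iff.1 h) 1).1

lemma dinf_op_mem {T : Op 𝓗} {x : 𝓗} (h : x ∈ T.Dinf) : T.op x ∈ T.Dinf := by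
  rw [mem_dinf_iff] at h ⊢
  exact fun n => (h (n+1)).2

lemma dinf_pw_mem {T : Op 𝓗} {x : 𝓗} (h : x ∈ T.Dinf) (k : ℕ) : T.pw k x ∈ T.Dinf := by
  induction k with
  | zero => exact h
  | succ k ih => rw [pw_succ']; exact dinf_op_mem ih

lemma domPow_zero_mem (T : Op 𝓗) (n : ℕ) : (0:𝓗) ∈ T.domPow n := by
  induction n with
  | zero => trivial
  | succ n ih => exact ⟨T.dom.zero_mem, by rw [map_zero]; exact ih⟩

lemma dinf_zero_mem (T : Op 𝓗) : (0:𝓗) ∈ T.Dinf :=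
  mem_dinf_iff.2 (T.domPow_zero_mem)

lemma domPow_add_mem {T : Op 𝓗} {x y : 𝓗} {n : ℕ} (hx : x ∈ T.domPow n)
    (hy : y ∈ T.domPow n) : x + y ∈ T.domPow n := by
  induction n generalizing x y with
  | zero => trivial
  | succ n ih =>
    exact ⟨T.dom.add_mem hx.1 hy.1, by rw [map_add]; exact ih hx.2 hy.2⟩

lemma domPow_smul_mem {T : Op 𝓗} {x : 𝓗} {n : ℕ} (a : ℂ) (hx : x ∈ T.domPow n) :
    a • x ∈ T.domPow n := by
  induction n generalizing x with
  | zero => trivial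
  | succ n ih => exact ⟨T.dom.smul_mem a hx.1, by rw [map_smul]; exact ih hx.2⟩

lemma dinf_add_mem {T : Op 𝓗} {x y : 𝓗} (hx : x ∈ T.Dinf) (hy : y ∈ T.Dinf) :
    x + y ∈ T.Dinf :=
  mem_dinf_iff.2 fun n => domPow_add_mem (mem_dinf_iff.1 hx n) (mem_dinf_iff.1 hy n)

lemma dinf_smul_mem {T : Op 𝓗} {x : 𝓗} (a : ℂ) (hx : x ∈ T.Dinf) : a • x ∈ T.Dinf :=
  mem_dinf_iff.2 fun n => domPow_smul_mem a (mem_dinf_iff.1 hx n)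

lemma symm_pw {T : Op 𝓗} (hT : T.Symmetric) {x y : 𝓗} (hx : x ∈ T.Dinf)
    (hy : y ∈ T.Dinf) (k : ℕ) : ⟪T.pw k x, y⟫ = ⟪x, T.pw k y⟫ := by
  induction k generalizing x with
  | zero => rfl
  | succ k ih =>
    rw [pw_succ, ih (dinf_op_mem hx), pw_succ']
    exact hT x (dinf_mem_dom hx) _ (dinf_mem_dom (dinf_pw_mem hy k))

open Filter Topology in
lemma closed_of_sa {T : Op 𝓗} (hsa : T.IsSelfAdjoint) {u : ℕ → 𝓗} {x y : 𝓗}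
    (hu : ∀ m, u m ∈ T.dom) (hx : Tendsto u atTop (𝓝 x))
    (hy : Tendsto (fun m => T.op (u m)) atTop (𝓝 y)) : x ∈ T.dom ∧ T.op x = y := by
  refine hsa.2.2 x y fun w hw => ?_
  have h1 : Tendsto (fun m => ⟪T.op w, u m⟫) atTop (𝓝 ⟪T.op w, x⟫) :=
    (tendsto_const_nhds.inner hx)
  have h2 : Tendsto (fun m => ⟪w, T.op (u m)⟫) atTop (𝓝 ⟪w, y⟫) :=
    (tendsto_const_nhds.inner hy)
  have he : (fun m => ⟪T.op w, u m⟫) = fun m => ⟪w, T.op (u m)⟫ := by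
    funext m; exact hsa.2.1 w hw (u m) (hu m)
  rw [he] at h1
  exact tendsto_nhds_unique h1 h2

open Filter Topology in
lemma dinf_closed {T : Op 𝓗} (hsa : T.IsSelfAdjoint) {u : ℕ → 𝓗} {y : ℕ → 𝓗}
    (hu : ∀ m, u m ∈ T.Dinf)
    (hy : ∀ n, Tendsto (fun m => T.pw n (u m)) atTop (𝓝 (y n))) :
    y 0 ∈ T.Dinf ∧ ∀ n, T.pw n (y 0) = y n := by
  have step : ∀ n, y n ∈ T.dom ∧ T.op (y n) = y (n+1) := by
    intro n
    refine closed_of_sa hsa (u := fun m => T.pw n (u m)) ?_ (hy n) ?_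
    · exact fun m => dinf_mem_dom (dinf_pw_mem (hu m) n)
    · have : (fun m => T.op (T.pw n (u m))) = fun m => T.pw (n+1) (u m) := by
        funext m; exact (pw_succ' T n (u m)).symm
      rw [this]; exact hy (n+1)
  have hpw : ∀ n, T.pw n (y 0) = y n := by
    intro n
    induction n with
    | zero => rfl
    | succ n ih => rw [pw_succ', ih]; exact (step n).2
  have hmem : ∀ n j, y j ∈ T.domPow n := by
    intro n
    induction n with
    | zero => intro j; trivial
    | succ n ih => exact fun j => ⟨(step j).1, by rw [(step j).2]; exact ih (j+1)⟩
  exact ⟨mem_dinf_iff.2 fun n => hmem n 0, hpw⟩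

end Op

/-- `D0` is a core for the `k`-th power of `T`. -/
def IsCorePow (T : Op 𝓗) (k : ℕ) (D0 : Set 𝓗) : Prop :=
  D0 ⊆ T.domPow k ∧ ∀ x ∈ T.domPow k, ∃ u : ℕ → 𝓗, (∀ n, u n ∈ D0) ∧
    Filter.Tendsto u Filter.atTop (nhds x) ∧
    Filter.Tendsto (fun n => T.pw k (u n)) Filter.atTop (nhds (T.pw k x))

/-- Membership in the O*-algebra `L†(D)`: `A` maps `D` into `D`, `D ⊆ D(A*)` and
`A* D ⊆ D` (witnessed by `Adag`). -/
def MemLdag (D : Set 𝓗) (A : 𝓗 →ₗ[ℂ] 𝓗) : Prop :=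
  (∀ x ∈ D, A x ∈ D) ∧
    ∃ Adag : 𝓗 →ₗ[ℂ] 𝓗, (∀ x ∈ D, Adag x ∈ D) ∧
      ∀ x ∈ D, ∀ y ∈ D, ⟪A x, y⟫ = ⟪x, Adag y⟫

/-- The operator norm of (the bounded extension of) `A`, computed on the unit ball of `D`. -/
noncomputable def opNormOn (D : Set 𝓗) (A : 𝓗 → 𝓗) : ℝ :=
  ⨆ φ : {ψ : 𝓗 // ψ ∈ D ∧ ‖ψ‖ ≤ 1}, ‖A ↑φ‖

/-- The class `F` of positive, bounded, continuous functions on `[0,∞)` which decrease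
faster than any inverse power of `x`. -/
def IsInF (f : ℝ → ℝ) : Prop :=
  Continuous f ∧ (∀ x : ℝ, 0 ≤ x → 0 < f x) ∧
    ∀ k : ℕ, ∃ M : ℝ, ∀ x : ℝ, 0 ≤ x → x ^ k * f x ≤ M

/-- The bounded measurable functional calculus of a self-adjoint operator `T` whose
spectrum is contained in `[a, ∞)`. -/
structure FnCalc (T : Op 𝓗) (a : ℝ) where
  Φ : (ℝ → ℝ) → (𝓗 →L[ℂ] 𝓗)
  Φ_one : Φ (fun _ => 1) = 1
  Φ_add : ∀ f g : ℝ → ℝ, Measurable f → Measurable g →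
    Φ (fun t => f t + g t) = Φ f + Φ g
  Φ_mul : ∀ f g : ℝ → ℝ, Measurable f → Measurable g →
    Φ (fun t => f t * g t) = (Φ f).comp (Φ g)
  Φ_symm : ∀ (f : ℝ → ℝ) (x y : 𝓗), ⟪Φ f x, y⟫ = ⟪x, Φ f y⟫
  Φ_norm : ∀ (f : ℝ → ℝ) (M : ℝ), (∀ t : ℝ, a ≤ t → |f t| ≤ M) →
    ∀ x : 𝓗, ‖Φ f x‖ ≤ M * ‖x‖
  Φ_supp : ∀ f : ℝ → ℝ, Measurable f → (∀ t : ℝ, a ≤ t → f t = 0) → Φ f = 0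
  Φ_pos : ∀ f : ℝ → ℝ, Measurable f → (∀ t : ℝ, a ≤ t → 0 ≤ f t) →
    ∀ x : 𝓗, 0 ≤ (⟪Φ f x, x⟫).re
  Φ_dom : ∀ f : ℝ → ℝ, Measurable f → (∃ M : ℝ, ∀ t : ℝ, a ≤ t → |t * f t| ≤ M) →
    ∀ x : 𝓗, Φ f x ∈ T.dom ∧ T.op (Φ f x) = Φ (fun t => t * f t) x
  Q_tendsto : ∀ x : 𝓗, Filter.Tendsto
    (fun L : ℝ => Φ (Set.indicator (Set.Icc a L) fun _ => (1 : ℝ)) x)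
    Filter.atTop (nhds x)

/-- The spectral projection `Q_L = E([a, L])` of `T`. -/
noncomputable def FnCalc.Q {T : Op 𝓗} {a : ℝ} (c : FnCalc T a) (L : ℝ) : 𝓗 →L[ℂ] 𝓗 :=
  c.Φ (Set.indicator (Set.Icc a L) fun _ => (1 : ℝ))

/-- The seminorm `A ↦ max{‖Tᵏ A f(T)‖, ‖f(T) A Tᵏ‖}` of the quasi-uniform topology
`τ_*` on `L†(D)`. -/
noncomputable def qseminorm {T : Op 𝓗} {a : ℝ} (c : FnCalc T a) (D : Set 𝓗)
    (f : ℝ → ℝ) (k : ℕ) (A : 𝓗 →ₗ[ℂ] 𝓗) : ℝ :=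
  max (opNormOn D fun φ => T.pw k (A (c.Φ f φ)))
      (opNormOn D fun φ => c.Φ f (A (T.pw k φ)))

/-- `i[A,T] = i(A T - T A)`, as a function. -/
noncomputable def commI (A T : 𝓗 → 𝓗) : 𝓗 → 𝓗 :=
  fun φ => Complex.I • (A (T φ) - T (A φ))

/-- Iterated commutators: `itComm A B j = [A, B]_j`, with `[A,B]_0 = B` and
`[A,B]_{j+1} = [A, [A,B]_j]`. -/
def itComm (A B : 𝓗 → 𝓗) : ℕ → (𝓗 → 𝓗)
  | 0 => B
  | j + 1 => fun φ => A (itComm A B j φ) - itComm A B j (A φ)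

-- ### chunk 2 : functional calculus helpers
open Op

/-- fast-decay predicate used as hypothesis. -/
def FD (f : ℝ → ℝ) : Prop :=
  Measurable f ∧ ∀ n : ℕ, ∃ M : ℝ, ∀ t : ℝ, 0 ≤ t → |t ^ n * f t| ≤ M

lemma FD.shift {f : ℝ → ℝ} (hf : FD f) : FD (fun t => t * f t) := by
  refine ⟨measurable_id.mul hf.1, fun n => ?_⟩
  obtain ⟨M, hM⟩ := hf.2 (n+1)
  exact ⟨M, fun t ht => by simpa [pow_succ, mul_assoc, mul_comm, mul_left_comm] using hM t ht⟩

lemma isInF_fd {f : ℝ → ℝ} (hf : IsInF f) : FD f := by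
  refine ⟨hf.1.measurable, fun n => ?_⟩
  obtain ⟨M, hM⟩ := hf.2.2 n
  refine ⟨M, fun t ht => ?_⟩
  have h1 : 0 ≤ t ^ n * f t := mul_nonneg (pow_nonneg ht n) (hf.2.1 t ht).le
  rw [abs_of_nonneg h1]; exact hM t ht

variable {T : Op 𝓗}

lemma phi_pw (c : FnCalc T 0) {f : ℝ → ℝ} (hf : FD f) (x : 𝓗) (n : ℕ) :
    c.Φ f x ∈ T.domPow n ∧ T.pw n (c.Φ f x) = c.Φ (fun t => t ^ n * f t) x := by
  induction n generalizing f with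
  | zero =>
    refine ⟨trivial, ?_⟩
    have : (fun t => t ^ 0 * f t) = f := by funext t; simp
    rw [this]; rfl
  | succ n ih =>
    obtain ⟨M, hM⟩ := hf.2 1
    have hdom := c.Φ_dom f hf.1 ⟨M, fun t ht => by simpa using hM t ht⟩ x
    have hg : FD (fun t => t * f t) := hf.shift
    obtain ⟨ihm, ihe⟩ := ih hg
    constructor
    · exact ⟨hdom.1, by rw [hdom.2]; exact ihm⟩
    · rw [pw_succ, hdom.2, ihe]
      have : (fun t => t ^ n * (t * f t)) = (fun t => t ^ (n+1) * f t) := by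
        funext t; ring
      rw [this]

lemma phi_mem_dinf (c : FnCalc T 0) {f : ℝ → ℝ} (hf : FD f) (x : 𝓗) :
    c.Φ f x ∈ T.Dinf :=
  mem_dinf_iff.2 fun n => (phi_pw c hf x n).1

lemma phi_sub (c : FnCalc T 0) {f g : ℝ → ℝ} (hf : Measurable f) (hg : Measurable g)
    (x : 𝓗) : c.Φ (fun t => f t - g t) x = c.Φ f x - c.Φ g x := by
  have h := c.Φ_add (fun t => f t - g t) g (hf.sub hg) hg
  have h2 : (fun t => (f t - g t) + g t) = f := by funext t; ring
  rw [h2] at h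
  have := congrArg (fun (L : 𝓗 →L[ℂ] 𝓗) => L x) h
  simp only [ContinuousLinearMap.add_apply] at this
  rw [this]; abel

/-- move powers of `T` through `Φ u` for smooth vectors. -/
lemma phi_shift (c : FnCalc T 0) (hsym : T.Symmetric) {u : ℝ → ℝ} (hu : FD u)
    {x : 𝓗} (hx : x ∈ T.Dinf) (r : ℕ) :
    c.Φ u (T.pw r x) = c.Φ (fun t => t ^ r * u t) x := by
  refine ext_inner_right ℂ fun y => ?_
  calc ⟪c.Φ u (T.pw r x), y⟫ = ⟪T.pw r x, c.Φ u y⟫ := c.Φ_symm u _ y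
  _ = ⟪x, T.pw r (c.Φ u y)⟫ := symm_pw hsym hx (phi_mem_dinf c hu y) r
  _ = ⟪x, c.Φ (fun t => t ^ r * u t) y⟫ := by rw [(phi_pw c hu y r).2]
  _ = ⟪c.Φ (fun t => t ^ r * u t) x, y⟫ := (c.Φ_symm _ x y).symm

lemma fd_indicator_one (L : ℝ) : FD (Set.indicator (Set.Icc (0:ℝ) L) fun _ => (1:ℝ)) := by
  refine ⟨(measurable_const.indicator measurableSet_Icc), fun n => ?_⟩
  refine ⟨max 0 L ^ n, fun t ht => ?_⟩
  by_cases h : t ∈ Set.Icc (0:ℝ) L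
  · rw [Set.indicator_of_mem h]
    rw [abs_of_nonneg (by positivity)]
    rw [mul_one]
    exact pow_le_pow_left₀ ht (h.2.trans (le_max_right 0 L)) n
  · rw [Set.indicator_of_notMem h]
    simp [pow_nonneg (le_max_left 0 (L:ℝ)) n]

open Filter Topology in
lemma dinf_dense (c : FnCalc T 0) : Dense (T.Dinf : Set 𝓗) := by
  intro x
  refine mem_closure_of_tendsto (c.Q_tendsto x) ?_
  filter_upwards with L
  exact phi_mem_dinf c (fd_indicator_one L) x

lemma norm_le_of_inner {D : Set 𝓗} (hD : Dense D) {v : 𝓗} {M : ℝ}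
    (h : ∀ y ∈ D, ‖⟪v, y⟫‖ ≤ M * ‖y‖) : ‖v‖ ≤ M ∨ ‖v‖ = 0 := by
  have hall : ∀ y : 𝓗, ‖⟪v, y⟫‖ ≤ M * ‖y‖ := by
    intro y
    have hc : IsClosed {y : 𝓗 | ‖⟪v, y⟫‖ ≤ M * ‖y‖} := by
      apply isClosed_le
      · exact (continuous_const.inner continuous_id).norm
      · exact continuous_const.mul continuous_norm
    have : closure D ⊆ {y : 𝓗 | ‖⟪v, y⟫‖ ≤ M * ‖y‖} := by
      apply closure_minimal _ hc
      exact fun z hz => h z hz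
    exact this (by rw [hD.closure_eq]; trivial)
  rcases eq_or_ne ‖v‖ 0 with h0 | h0
  · exact Or.inr h0
  · left
    have := hall v
    rw [inner_self_eq_norm_sq_to_K (𝕜 := ℂ) v] at this
    have h2 : ‖v‖ * ‖v‖ ≤ M * ‖v‖ := by
      calc ‖v‖ * ‖v‖ = ‖((‖v‖ : ℂ))^2‖ := by
            rw [norm_pow]; simp [pow_two]
      _ ≤ M * ‖v‖ := this
    have hv : 0 < ‖v‖ := lt_of_le_of_ne (norm_nonneg v) (Ne.symm h0)
    exact le_of_mul_le_mul_right (by linarith) hv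

lemma norm_le_of_inner' {D : Set 𝓗} (hD : Dense D) {v : 𝓗} {M : ℝ} (hM : 0 ≤ M)
    (h : ∀ y ∈ D, ‖⟪v, y⟫‖ ≤ M * ‖y‖) : ‖v‖ ≤ M := by
  rcases norm_le_of_inner hD h with h1 | h1
  · exact h1
  · rw [h1]; exact hM


-- ### chunk 3 : Baire-category uniform bound
set_option maxHeartbeats 1000000 in
open Filter Topology in
lemma baire_bound [CompleteSpace 𝓗] (H2 : Op 𝓗) (hsa2 : H2.IsSelfAdjoint) (D : Set 𝓗)
    (hD2 : D = H2.Dinf) (hdense : Dense D)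
    (T G : 𝓗 →ₗ[ℂ] 𝓗) (hTG : ∀ x ∈ D, ∀ y ∈ D, ⟪T x, y⟫ = ⟪x, G y⟫) :
    ∃ N : ℕ, ∃ C : ℝ, 0 < C ∧
      ∀ ψ ∈ D, ‖T ψ‖ ≤ C * ∑ n ∈ Finset.range (N+1), ‖H2.pw n ψ‖ := by
  classical
  letI : MetricSpace (ℕ → 𝓗) := PiCountable.metricSpace
  haveI : CompleteSpace (ℕ → 𝓗) := Pi.complete _
  -- the graph space
  set S : Set (ℕ → 𝓗) := {u | u 0 ∈ D ∧ ∀ n, u n = H2.pw n (u 0)} with hS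
  have hSclosed : IsClosed S := by
    refine IsSeqClosed.isClosed ?_
    intro u p hu hconv
    have hcoord : ∀ k, Tendsto (fun m => u m k) atTop (𝓝 (p k)) := by
      intro k
      exact ((continuous_apply k).continuousAt.tendsto).comp hconv
    have hmemD : ∀ m, u m 0 ∈ H2.Dinf := fun m => hD2 ▸ (hu m).1
    have hpows : ∀ n, Tendsto (fun m => H2.pw n (u m 0)) atTop (𝓝 (p n)) := by
      intro n
      have : (fun m => H2.pw n (u m 0)) = fun m => u m n := by
        funext m; exact ((hu m).2 n).symm
      rw [this]; exact hcoord n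
    obtain ⟨hp0, hpn⟩ := Op.dinf_closed hsa2 hmemD hpows
    exact ⟨hD2 ▸ hp0, fun n => (hpn n).symm⟩
  haveI : Nonempty ↥S := ⟨⟨fun _ => 0, by
    constructor
    · exact hD2 ▸ H2.dinf_zero_mem
    · intro n; rw [H2.pw_zero']⟩⟩
  haveI : CompleteSpace ↥S := hSclosed.completeSpace_coe
  -- the closed covering
  set F : ℕ → Set ↥S := fun M =>
    {u | ∀ y ∈ D, ‖⟪(↑u : ℕ → 𝓗) 0, G y⟫‖ ≤ (M : ℝ) * ‖y‖} with hF
  have hFclosed : ∀ M, IsClosed (F M) := by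
    intro M
    have : F M = ⋂ (y : 𝓗) (_ : y ∈ D),
        {u : ↥S | ‖⟪(↑u : ℕ → 𝓗) 0, G y⟫‖ ≤ (M : ℝ) * ‖y‖} := by
      ext u; simp [hF]
    rw [this]
    refine isClosed_iInter fun y => isClosed_iInter fun hy => ?_
    exact isClosed_le
      ((((continuous_apply 0).comp continuous_subtype_val).inner continuous_const).norm)
      continuous_const
  have hFcover : ⋃ M, F M = Set.univ := by
    rw [Set.iUnion_eq_univ_iff]
    intro u
    refine ⟨⌈‖T ((↑u : ℕ → 𝓗) 0)‖⌉₊, fun y hy => ?_⟩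
    have h1 : ⟪(↑u : ℕ → 𝓗) 0, G y⟫ = ⟪T ((↑u : ℕ → 𝓗) 0), y⟫ :=
      (hTG _ u.2.1 y hy).symm
    rw [h1]
    calc ‖⟪T ((↑u : ℕ → 𝓗) 0), y⟫‖ ≤ ‖T ((↑u : ℕ → 𝓗) 0)‖ * ‖y‖ := norm_inner_le_norm _ _
    _ ≤ _ := by
      have := Nat.le_ceil ‖T ((↑u : ℕ → 𝓗) 0)‖
      exact mul_le_mul_of_nonneg_right this (norm_nonneg _)
  obtain ⟨M, hM⟩ := nonempty_interior_of_iUnion_of_closed hFclosed hFcover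
  obtain ⟨u₀, hu₀⟩ := hM
  rw [mem_interior_iff_mem_nhds, Metric.mem_nhds_iff] at hu₀
  obtain ⟨ε, hε, hball⟩ := hu₀
  -- choose N and δ
  obtain ⟨N, hN⟩ := exists_pow_lt_of_lt_one (half_pos hε) (by norm_num : (1/2:ℝ) < 1)
  set δ : ℝ := ε / (4 * (N + 1)) with hδ
  have hδpos : 0 < δ := by positivity
  -- distance computation in the product metric
  have hdistw : ∀ w : ℕ → 𝓗, (∀ n ∈ Finset.range (N+1), ‖w n‖ ≤ δ) →
      dist w (0 : ℕ → 𝓗) < ε := by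
    intro w hw
    have hsumm : Summable (fun n : ℕ => min ((1/2:ℝ)^n) (dist (w n) 0)) := by
      have := PiCountable.dist_summable w (0 : ℕ → 𝓗)
      simpa only [Encodable.encode_nat, one_div, Pi.zero_apply] using this
    have hdeq : dist w (0 : ℕ → 𝓗) = ∑' n : ℕ, min ((1/2:ℝ)^n) (dist (w n) 0) := by
      rw [PiCountable.dist_eq_tsum]
      simp only [Encodable.encode_nat, Pi.zero_apply, one_div]
    rw [hdeq, ← Summable.sum_add_tsum_nat_add (N+1) hsumm]
    have h1 : ∑ n ∈ Finset.range (N+1), min ((1/2:ℝ)^n) (dist (w n) 0) ≤ ε/4 := by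
      have h0 : ∑ n ∈ Finset.range (N+1), min ((1/2:ℝ)^n) (dist (w n) 0) ≤
          ∑ _n ∈ Finset.range (N+1), δ := by
        refine Finset.sum_le_sum fun n hn => ?_
        calc min ((1/2:ℝ)^n) (dist (w n) 0) ≤ dist (w n) 0 := min_le_right _ _
        _ = ‖w n‖ := by rw [dist_zero_right]
        _ ≤ δ := hw n hn
      refine h0.trans (le_of_eq ?_)
      rw [Finset.sum_const, Finset.card_range, nsmul_eq_mul, hδ]
      field_simp
      push_cast
      ring
    have hgeo : Summable (fun n : ℕ => (1/2:ℝ)^(n + (N+1))) := by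
      refine Summable.congr ((summable_geometric_of_lt_one (by norm_num) (by norm_num)
        (r := 1/2)).mul_left ((1/2:ℝ)^(N+1))) ?_
      intro n; rw [pow_add]; ring
    have h2 : ∑' n : ℕ, min ((1/2:ℝ)^(n + (N+1))) (dist (w (n + (N+1))) 0) ≤
        ∑' n : ℕ, (1/2:ℝ)^(n + (N+1)) :=
      Summable.tsum_le_tsum (fun n => min_le_left _ _) ((summable_nat_add_iff (N+1)).2 hsumm) hgeo
    have h3 : ∑' n : ℕ, (1/2:ℝ)^(n + (N+1)) = (1/2:ℝ)^N := by
      have he : ∀ n : ℕ, (1/2:ℝ)^(n + (N+1)) = (1/2:ℝ)^(N+1) * (1/2)^n := by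
        intro n; rw [pow_add]; ring
      rw [tsum_congr he, tsum_mul_left,
        tsum_geometric_of_lt_one (by norm_num) (by norm_num), pow_succ]
      ring
    calc ∑ n ∈ Finset.range (N+1), min ((1/2:ℝ)^n) (dist (w n) 0)
          + ∑' n : ℕ, min ((1/2:ℝ)^(n+(N+1))) (dist (w (n+(N+1))) 0)
        ≤ ε/4 + (1/2:ℝ)^N := add_le_add h1 (h2.trans (le_of_eq h3))
    _ < ε/4 + ε/2 := by linarith
    _ < ε := by linarith
  -- small smooth vectors give uniform bound M
  have hsmall : ∀ x ∈ D, (∀ n ∈ Finset.range (N+1), ‖H2.pw n x‖ ≤ δ) → ‖T x‖ ≤ M := by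
    intro x hx hxs
    set v : ℕ → 𝓗 := (↑u₀ : ℕ → 𝓗) with hv
    set Jx : ℕ → 𝓗 := fun n => H2.pw n x with hJ
    have hJmem : ∀ (z : ℕ → 𝓗), z ∈ S → z + Jx ∈ S := by
      intro z hz
      refine ⟨hD2 ▸ Op.dinf_add_mem (hD2 ▸ hz.1) (hD2 ▸ hx), fun n => ?_⟩
      simp only [Pi.add_apply, hJ]
      rw [hz.2 n, hz.2 0, ← H2.pw_add]
      rfl
    have hJmem' : ∀ (z : ℕ → 𝓗), z ∈ S → z - Jx ∈ S := by
      intro z hz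
      refine ⟨hD2 ▸ ?_, fun n => ?_⟩
      · show z 0 - x ∈ H2.Dinf
        have hzx : z 0 - x = z 0 + (-1 : ℂ) • x := by
          rw [neg_one_smul]; abel
        rw [hzx]
        exact Op.dinf_add_mem (hD2 ▸ hz.1) (Op.dinf_smul_mem _ (hD2 ▸ hx))
      · simp only [Pi.sub_apply, hJ]
        rw [hz.2 n, hz.2 0, ← H2.pw_sub]
        rfl
    have hdplus : dist (v + Jx) v < ε := by
      have he : dist (v + Jx) v = dist Jx 0 := by
        rw [PiCountable.dist_eq_tsum, PiCountable.dist_eq_tsum]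
        congr 1; funext n
        congr 1
        have h9 : v n + Jx n - v n = Jx n := by abel
        rw [dist_eq_norm, dist_eq_norm, Pi.add_apply, Pi.zero_apply, sub_zero, h9]
      rw [he]
      exact hdistw Jx (fun n hn => hxs n hn)
    have hdminus : dist (v - Jx) v < ε := by
      have he : dist (v - Jx) v = dist Jx 0 := by
        rw [PiCountable.dist_eq_tsum, PiCountable.dist_eq_tsum]
        congr 1; funext n
        congr 1
        have h9 : v n - Jx n - v n = -(Jx n) := by abel
        rw [dist_eq_norm, dist_eq_norm, Pi.sub_apply, Pi.zero_apply, sub_zero, h9, norm_neg]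
      rw [he]
      exact hdistw Jx (fun n hn => hxs n hn)
    have hup : (⟨v + Jx, hJmem v u₀.2⟩ : ↥S) ∈ F M := by
      apply hball
      rw [Metric.mem_ball, Subtype.dist_eq]
      exact hdplus
    have hum : (⟨v - Jx, hJmem' v u₀.2⟩ : ↥S) ∈ F M := by
      apply hball
      rw [Metric.mem_ball, Subtype.dist_eq]
      exact hdminus
    have hxb : ∀ y ∈ D, ‖⟪x, G y⟫‖ ≤ M * ‖y‖ := by
      intro y hy
      have h1 := hup y hy
      have h2 := hum y hy
      simp only [Pi.add_apply, Pi.sub_apply] at h1 h2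
      have hid : ⟪x, G y⟫ =
          (⟪v 0 + Jx 0, G y⟫ - ⟪v 0 - Jx 0, G y⟫) / 2 := by
        rw [inner_add_left, inner_sub_left]
        have : Jx 0 = x := rfl
        rw [this]; ring
      rw [hid]
      calc ‖(⟪v 0 + Jx 0, G y⟫ - ⟪v 0 - Jx 0, G y⟫) / 2‖
          ≤ (‖⟪v 0 + Jx 0, G y⟫‖ + ‖⟪v 0 - Jx 0, G y⟫‖) / 2 := by
            rw [norm_div]
            simp only [Complex.norm_ofNat]
            gcongr
            exact norm_sub_le _ _
      _ ≤ ((M:ℝ) * ‖y‖ + (M:ℝ) * ‖y‖) / 2 := by gcongr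
      _ = (M:ℝ) * ‖y‖ := by ring
    refine norm_le_of_inner' hdense (by positivity) fun y hy => ?_
    rw [hTG x hx y hy]
    exact hxb y hy
  -- homogenize
  refine ⟨N, (M + 1) / δ, by positivity, fun ψ hψ => ?_⟩
  set s : ℝ := ∑ n ∈ Finset.range (N+1), ‖H2.pw n ψ‖ with hs
  have hterm : ∀ n ∈ Finset.range (N+1), ‖H2.pw n ψ‖ ≤ s := by
    intro n hn
    exact Finset.single_le_sum (f := fun n => ‖H2.pw n ψ‖)
      (fun i _ => norm_nonneg _) hn
  have hsnn : 0 ≤ s := Finset.sum_nonneg fun i _ => norm_nonneg _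
  rcases eq_or_lt_of_le hsnn with h0 | hspos
  · -- s = 0 forces ψ = 0
    have hψ0 : ‖ψ‖ ≤ 0 := by
      have := hterm 0 (Finset.mem_range.2 (Nat.succ_pos N))
      rw [H2.pw_zero_app] at this
      linarith [this, h0]
    have : ψ = 0 := norm_le_zero_iff.1 hψ0
    rw [this, map_zero, norm_zero]
    positivity
  · set x : 𝓗 := ((δ / s : ℝ) : ℂ) • ψ with hxd
    have hxD : x ∈ D := hD2 ▸ Op.dinf_smul_mem _ (hD2 ▸ hψ)
    have hnorm : ∀ n, ‖H2.pw n x‖ = (δ / s) * ‖H2.pw n ψ‖ := by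
      intro n
      rw [hxd, H2.pw_smul, norm_smul]
      congr 1
      rw [Complex.norm_real, Real.norm_of_nonneg (by positivity)]
    have hsm : ∀ n ∈ Finset.range (N+1), ‖H2.pw n x‖ ≤ δ := by
      intro n hn
      rw [hnorm n]
      calc (δ / s) * ‖H2.pw n ψ‖ ≤ (δ / s) * s :=
        mul_le_mul_of_nonneg_left (hterm n hn) (by positivity)
      _ = δ := by field_simp
    have hTx := hsmall x hxD hsm
    have hTxe : ‖T x‖ = (δ / s) * ‖T ψ‖ := by
      rw [hxd, map_smul, norm_smul, Complex.norm_real, Real.norm_of_nonneg (by positivity)]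
    rw [hTxe] at hTx
    have : ‖T ψ‖ ≤ (M / δ) * s := by
      rw [div_mul_eq_mul_div, le_div_iff₀ hδpos]
      calc ‖T ψ‖ * δ = ((δ / s) * ‖T ψ‖) * s := by field_simp
      _ ≤ (M:ℝ) * s := mul_le_mul_of_nonneg_right hTx hsnn
    calc ‖T ψ‖ ≤ (M / δ) * s := this
    _ ≤ ((M + 1) / δ) * s := by
      apply mul_le_mul_of_nonneg_right _ hsnn
      exact (div_le_div_iff_of_pos_right hδpos).2 (by linarith)

-- ### chunk 4 : opNormOn toolkit and instances of the uniform bound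
lemma opNormOn_nonneg (D : Set 𝓗) (F : 𝓗 → 𝓗) : 0 ≤ opNormOn D F :=
  Real.iSup_nonneg fun _ => norm_nonneg _

lemma qseminorm_nonneg {T : Op 𝓗} {a : ℝ} (c : FnCalc T a) (D : Set 𝓗)
    (f : ℝ → ℝ) (k : ℕ) (A : 𝓗 →ₗ[ℂ] 𝓗) : 0 ≤ qseminorm c D f k A :=
  le_trans (opNormOn_nonneg _ _) (le_max_left _ _)

lemma opNormOn_le (D : Set 𝓗) (F : 𝓗 → 𝓗) {M : ℝ} (hM : 0 ≤ M)
    (h : ∀ ψ, ψ ∈ D → ‖ψ‖ ≤ 1 → ‖F ψ‖ ≤ M) : opNormOn D F ≤ M :=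
  Real.iSup_le (fun φ => h φ φ.2.1 φ.2.2) hM

lemma le_opNormOn (D : Set 𝓗) (F : 𝓗 → 𝓗) {M : ℝ}
    (h : ∀ ψ, ψ ∈ D → ‖ψ‖ ≤ 1 → ‖F ψ‖ ≤ M)
    {ψ : 𝓗} (hψ : ψ ∈ D) (h1 : ‖ψ‖ ≤ 1) : ‖F ψ‖ ≤ opNormOn D F :=
  le_ciSup ⟨M, by rintro r ⟨φ, rfl⟩; exact h φ φ.2.1 φ.2.2⟩
    (⟨ψ, hψ, h1⟩ : {ψ : 𝓗 // ψ ∈ D ∧ ‖ψ‖ ≤ 1})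

/-- scaled version, for `ℂ`-homogeneous maps on a scaling-invariant domain. -/
lemma norm_le_opNormOn_mul (D : Set 𝓗) (F : 𝓗 → 𝓗)
    (hDs : ∀ (a : ℂ) {ψ : 𝓗}, ψ ∈ D → a • ψ ∈ D)
    (hlin : ∀ (a : ℂ) (ψ : 𝓗), F (a • ψ) = a • F ψ)
    {M : ℝ} (h : ∀ ψ, ψ ∈ D → ‖ψ‖ ≤ 1 → ‖F ψ‖ ≤ M)
    {ψ : 𝓗} (hψ : ψ ∈ D) : ‖F ψ‖ ≤ opNormOn D F * ‖ψ‖ := by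
  rcases eq_or_ne ψ 0 with rfl | hne
  · have hF0 : F 0 = 0 := by
      have := hlin 0 0
      simpa using this
    simp only [hF0, norm_zero, mul_zero, le_refl]
  · have hnpos : 0 < ‖ψ‖ := norm_pos_iff.2 hne
    set a : ℂ := ((‖ψ‖⁻¹ : ℝ) : ℂ) with ha
    have hna : ‖a • ψ‖ = 1 := by
      rw [norm_smul, ha, Complex.norm_real, Real.norm_of_nonneg (by positivity)]
      field_simp
    have h1 : ‖F (a • ψ)‖ ≤ opNormOn D F :=
      le_opNormOn D F h (hDs a hψ) hna.le
    rw [hlin a ψ, norm_smul, ha, Complex.norm_real,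
      Real.norm_of_nonneg (by positivity)] at h1
    calc ‖F ψ‖ = (‖ψ‖⁻¹ * ‖F ψ‖) * ‖ψ‖ := by field_simp
    _ ≤ opNormOn D F * ‖ψ‖ := mul_le_mul_of_nonneg_right h1 hnpos.le

section OneSided
variable [CompleteSpace 𝓗] {H1 H2 : Op 𝓗} {D : Set 𝓗}

/-- comparison of powers of the two operators on `D` -/
lemma key_bound (hsa1 : H1.IsSelfAdjoint) (hsa2 : H2.IsSelfAdjoint)
    (c2 : FnCalc H2 0) (hD1 : D = H1.Dinf) (hD2 : D = H2.Dinf) (k : ℕ) :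
    ∃ N : ℕ, ∃ C : ℝ, 0 < C ∧
      ∀ ψ ∈ D, ‖H1.pw k ψ‖ ≤ C * ∑ n ∈ Finset.range (N+1), ‖H2.pw n ψ‖ := by
  have hdense : Dense D := by rw [hD2]; exact dinf_dense c2
  obtain ⟨N, C, hC, hb⟩ := baire_bound H2 hsa2 D hD2 hdense (H1.op ^ k) (H1.op ^ k)
    (fun x hx y hy => by
      rw [← Op.pw_eq, ← Op.pw_eq]
      exact Op.symm_pw hsa1.2.1 (hD1 ▸ hx) (hD1 ▸ hy) k)
  refine ⟨N, C, hC, fun ψ hψ => ?_⟩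
  rw [Op.pw_eq]
  exact hb ψ hψ

/-- `A`-dependent graph-continuity bound for elements of `L†(D)`. -/
lemma ldag_bound (hsa2 : H2.IsSelfAdjoint) (c2 : FnCalc H2 0) (hD2 : D = H2.Dinf)
    (A Adag : 𝓗 →ₗ[ℂ] 𝓗) (hA1 : ∀ x ∈ D, A x ∈ D)
    (had : ∀ x ∈ D, ∀ y ∈ D, ⟪A x, y⟫ = ⟪x, Adag y⟫) (m : ℕ) :
    ∃ N : ℕ, ∃ C : ℝ, 0 < C ∧
      ∀ ψ ∈ D, ‖H2.pw m (A ψ)‖ ≤ C * ∑ n ∈ Finset.range (N+1), ‖H2.pw n ψ‖ := by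
  have hdense : Dense D := by rw [hD2]; exact dinf_dense c2
  obtain ⟨N, C, hC, hb⟩ := baire_bound H2 hsa2 D hD2 hdense ((H2.op ^ m).comp A)
    (Adag.comp (H2.op ^ m))
    (fun x hx y hy => by
      simp only [LinearMap.comp_apply]
      rw [← Op.pw_eq, ← Op.pw_eq]
      calc ⟪H2.pw m (A x), y⟫ = ⟪A x, H2.pw m y⟫ :=
        Op.symm_pw hsa2.2.1 (hD2 ▸ hA1 x hx) (hD2 ▸ hy) m
      _ = ⟪x, Adag (H2.pw m y)⟫ :=
        had x hx _ (hD2 ▸ Op.dinf_pw_mem (hD2 ▸ hy) m))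
  refine ⟨N, C, hC, fun ψ hψ => ?_⟩
  have := hb ψ hψ
  simpa only [LinearMap.comp_apply, ← Op.pw_eq] using this

/-- uniform norm bounds for `Φ` applied to functions of class `F`. -/
lemma phi_isInF_bound {T : Op 𝓗} (c : FnCalc T 0) {g : ℝ → ℝ} (hg : IsInF g) (n : ℕ) :
    ∃ M : ℝ, 0 ≤ M ∧ ∀ x : 𝓗, ‖T.pw n (c.Φ g x)‖ ≤ M * ‖x‖ := by
  obtain ⟨M, hM⟩ := (isInF_fd hg).2 n
  have hM0 : 0 ≤ M := le_trans (abs_nonneg _) (hM 0 le_rfl)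
  refine ⟨M, hM0, fun x => ?_⟩
  rw [(phi_pw c (isInF_fd hg) x n).2]
  exact c.Φ_norm _ M hM x

end OneSided

-- ### chunk 5 : construction of the interpolating F-function
noncomputable def cbar (c : ℕ → ℝ) : ℕ → ℝ
  | 0 => max 1 (c 0)
  | n+1 => max (cbar c n) (c (n+1))

lemma one_le_cbar (c : ℕ → ℝ) (n : ℕ) : 1 ≤ cbar c n := by
  induction n with
  | zero => exact le_max_left _ _
  | succ n ih => exact le_trans ih (le_max_left _ _)

lemma le_cbar (c : ℕ → ℝ) (n : ℕ) : c n ≤ cbar c n := by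
  cases n with
  | zero => exact le_max_right _ _
  | succ n => exact le_max_right _ _

lemma cbar_mono (c : ℕ → ℝ) : Monotone (cbar c) :=
  monotone_nat_of_le_succ fun n => le_max_left _ _

noncomputable def rk (c : ℕ → ℝ) : ℕ → ℕ
  | 0 => 0
  | K+1 => if cbar c (rk c K + 1) ≤ (K+1 : ℝ) then rk c K + 1 else rk c K

lemma rk_succ_le (c : ℕ → ℝ) (K : ℕ) : rk c (K+1) ≤ rk c K + 1 := by
  rw [rk]; split <;> omega

lemma rk_le_succ (c : ℕ → ℝ) (K : ℕ) : rk c K ≤ rk c (K+1) := by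
  rw [rk]; split <;> omega

lemma rk_mono (c : ℕ → ℝ) : Monotone (rk c) :=
  monotone_nat_of_le_succ (rk_le_succ c)

lemma cbar_rk_le (c : ℕ → ℝ) (K : ℕ) : cbar c (rk c K) ≤ max (cbar c 0) K := by
  induction K with
  | zero => simpa [rk] using le_max_left _ _
  | succ K ih =>
    rw [rk]
    split
    · rename_i h
      refine le_trans h ?_
      push_cast
      exact le_max_right _ _
    · refine le_trans ih (max_le_max le_rfl ?_)
      exact_mod_cast Nat.le_succ K

lemma rk_tendsto (c : ℕ → ℝ) (R : ℕ) : ∃ N, ∀ K ≥ N, R ≤ rk c K := by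
  induction R with
  | zero => exact ⟨0, fun K _ => Nat.zero_le _⟩
  | succ R ih =>
    obtain ⟨N, hN⟩ := ih
    refine ⟨max N ⌈cbar c (R+1)⌉₊ + 1, fun K hK => ?_⟩
    obtain ⟨K', rfl⟩ : ∃ K', K = K' + 1 := ⟨K - 1, by omega⟩
    have hK' : K' ≥ max N ⌈cbar c (R+1)⌉₊ := by omega
    have h1 : R ≤ rk c K' := hN K' (le_trans (le_max_left _ _) hK')
    rcases eq_or_lt_of_le h1 with he | hl
    · rw [rk]
      split
      · omega
      · rename_i h
        exfalso
        apply h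
        rw [← he]
        calc cbar c (R + 1) ≤ (⌈cbar c (R+1)⌉₊ : ℝ) := Nat.le_ceil _
        _ ≤ (K':ℝ) + 1 := by
          have h9 : ⌈cbar c (R+1)⌉₊ ≤ K' + 1 := by
            have := le_trans (le_max_right N _) hK'
            omega
          exact_mod_cast h9
    · have := rk_le_succ c K'
      omega

noncomputable def dsq (c : ℕ → ℝ) (K : ℕ) : ℝ := (((K:ℝ)+1) ^ (rk c K / 2))⁻¹

lemma dsq_pos (c : ℕ → ℝ) (K : ℕ) : 0 < dsq c K := by
  have : (0:ℝ) < ((K:ℝ)+1) ^ (rk c K / 2) := by positivity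
  exact inv_pos.2 this

lemma dsq_le_one (c : ℕ → ℝ) (K : ℕ) : dsq c K ≤ 1 := by
  rw [dsq]
  refine inv_le_one_of_one_le₀ (one_le_pow₀ ?_)
  have : (0:ℝ) ≤ (K:ℝ) := Nat.cast_nonneg K
  linarith

lemma dsq_anti (c : ℕ → ℝ) : Antitone (dsq c) := by
  refine antitone_nat_of_succ_le fun K => ?_
  rw [dsq, dsq]
  have h1 : (0:ℝ) ≤ (K:ℝ) := Nat.cast_nonneg K
  refine inv_anti₀ (by positivity) ?_
  calc ((K:ℝ)+1) ^ (rk c K / 2) ≤ ((K:ℝ)+1+1) ^ (rk c K / 2) := by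
        apply pow_le_pow_left₀ (by linarith) (by linarith)
  _ ≤ ((K:ℝ)+1+1) ^ (rk c (K+1) / 2) := by
        apply pow_le_pow_right₀ (by linarith)
        exact Nat.div_le_div_right (rk_le_succ c K)
  _ = (((K+1:ℕ):ℝ)+1) ^ (rk c (K+1) / 2) := by push_cast; ring_nf

lemma inv_dsq_succ_le (c : ℕ → ℝ) (K : ℕ) :
    (dsq c (K+1))⁻¹ ≤ ((K:ℝ)+2) ^ (rk c K / 2 + 1) := by
  rw [dsq, inv_inv]
  have h1 : (0:ℝ) ≤ (K:ℝ) := Nat.cast_nonneg K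
  have h2 : rk c (K+1) / 2 ≤ rk c K / 2 + 1 := by
    have := rk_succ_le c K; omega
  calc (((K+1:ℕ):ℝ)+1) ^ (rk c (K+1) / 2) = ((K:ℝ)+2) ^ (rk c (K+1) / 2) := by
        push_cast; ring_nf
  _ ≤ ((K:ℝ)+2) ^ (rk c K / 2 + 1) := pow_le_pow_right₀ (by linarith) h2

noncomputable def gfun (c : ℕ → ℝ) : ℝ → ℝ :=
  fun t => dsq c 0 - ∑' K : ℕ, (dsq c K - dsq c (K+1)) * min 1 (max 0 (t - (K:ℝ)))

lemma u_nonneg (c : ℕ → ℝ) (K : ℕ) : 0 ≤ dsq c K - dsq c (K+1) :=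
  sub_nonneg.2 (dsq_anti c (Nat.le_succ K))

lemma u_summable (c : ℕ → ℝ) : Summable (fun K => dsq c K - dsq c (K+1)) := by
  apply summable_of_sum_range_le (u_nonneg c)
  intro n
  rw [Finset.sum_range_sub' (fun K => dsq c K)]
  have := (dsq_pos c n).le
  linarith

lemma clamp_mem (t : ℝ) (K : ℕ) : min 1 (max 0 (t - (K:ℝ))) ∈ Set.Icc (0:ℝ) 1 := by
  constructor
  · exact le_min (by norm_num) (le_max_left _ _)
  · exact min_le_left _ _

lemma gfun_cont (c : ℕ → ℝ) : Continuous (gfun c) := by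
  refine continuous_const.sub (continuous_tsum ?_ (u_summable c) ?_)
  · intro K
    exact continuous_const.mul
      (continuous_const.min (continuous_const.max (continuous_id.sub continuous_const)))
  · intro K t
    rw [Real.norm_eq_abs, abs_mul, abs_of_nonneg (u_nonneg c K),
      abs_of_nonneg (clamp_mem t K).1]
    calc (dsq c K - dsq c (K+1)) * min 1 (max 0 (t - (K:ℝ)))
        ≤ (dsq c K - dsq c (K+1)) * 1 :=
          mul_le_mul_of_nonneg_left (clamp_mem t K).2 (u_nonneg c K)
    _ = _ := mul_one _

lemma gfun_eval (c : ℕ → ℝ) (K : ℕ) {t : ℝ} (ht : t ∈ Set.Icc (K:ℝ) ((K:ℝ)+1)) :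
    gfun c t = dsq c K - (dsq c K - dsq c (K+1)) * (t - K) := by
  have htsum : ∑' J : ℕ, (dsq c J - dsq c (J+1)) * min 1 (max 0 (t - (J:ℝ)))
      = ∑ J ∈ Finset.range (K+1), (dsq c J - dsq c (J+1)) * min 1 (max 0 (t - (J:ℝ))) := by
    apply tsum_eq_sum
    intro J hJ
    have hJK : (K:ℝ) + 1 ≤ (J:ℝ) := by
      rw [Finset.mem_range, not_lt] at hJ
      exact_mod_cast hJ
    have : t - (J:ℝ) ≤ 0 := by
      have := ht.2; linarith
    rw [max_eq_left this, min_eq_right (by norm_num)]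
    ring
  have hsum : ∑ J ∈ Finset.range (K+1), (dsq c J - dsq c (J+1)) * min 1 (max 0 (t - (J:ℝ)))
      = (dsq c 0 - dsq c K) + (dsq c K - dsq c (K+1)) * (t - K) := by
    rw [Finset.sum_range_succ]
    have h1 : ∀ J ∈ Finset.range K, (dsq c J - dsq c (J+1)) * min 1 (max 0 (t - (J:ℝ)))
        = dsq c J - dsq c (J+1) := by
      intro J hJ
      have hJK : (J:ℝ) + 1 ≤ (K:ℝ) := by
        rw [Finset.mem_range] at hJ
        exact_mod_cast hJ
      have h2 : (1:ℝ) ≤ t - (J:ℝ) := by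
        have := ht.1; linarith
      rw [max_eq_right (by linarith), min_eq_left h2, mul_one]
    rw [Finset.sum_congr rfl h1, Finset.sum_range_sub' (fun K => dsq c K)]
    congr 1
    have h2 : (0:ℝ) ≤ t - (K:ℝ) := by have := ht.1; linarith
    have h3 : t - (K:ℝ) ≤ 1 := by have := ht.2; linarith
    rw [max_eq_right h2, min_eq_right h3]
  rw [gfun, htsum, hsum]
  ring

lemma gfun_lower (c : ℕ → ℝ) (K : ℕ) {t : ℝ} (ht : t ∈ Set.Icc (K:ℝ) ((K:ℝ)+1)) :
    dsq c (K+1) ≤ gfun c t := by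
  rw [gfun_eval c K ht]
  have h1 : (dsq c K - dsq c (K+1)) * (t - K) ≤ (dsq c K - dsq c (K+1)) * 1 := by
    apply mul_le_mul_of_nonneg_left _ (u_nonneg c K)
    have := ht.2; linarith
  linarith

lemma gfun_upper (c : ℕ → ℝ) (K : ℕ) {t : ℝ} (ht : t ∈ Set.Icc (K:ℝ) ((K:ℝ)+1)) :
    gfun c t ≤ dsq c K := by
  rw [gfun_eval c K ht]
  have h1 : 0 ≤ (dsq c K - dsq c (K+1)) * (t - K) := by
    apply mul_nonneg (u_nonneg c K)
    have := ht.1; linarith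
  linarith

lemma floor_Icc {t : ℝ} (ht : 0 ≤ t) : t ∈ Set.Icc ((⌊t⌋₊:ℝ)) ((⌊t⌋₊:ℝ)+1) :=
  ⟨Nat.floor_le ht, (Nat.lt_floor_add_one t).le⟩

lemma gfun_pos (c : ℕ → ℝ) (t : ℝ) : 0 < gfun c t := by
  rcases le_or_gt t 0 with h | h
  · have : gfun c t = dsq c 0 := by
      rw [gfun]
      have : ∑' K : ℕ, (dsq c K - dsq c (K+1)) * min 1 (max 0 (t - (K:ℝ))) = 0 := by
        rw [tsum_congr (fun K => ?_), tsum_zero]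
        have h1 : t - (K:ℝ) ≤ 0 := by
          have : (0:ℝ) ≤ (K:ℝ) := Nat.cast_nonneg K
          linarith
        rw [max_eq_left h1, min_eq_right (by norm_num)]
        ring
      rw [this]; ring
    rw [this]; exact dsq_pos c 0
  · exact lt_of_lt_of_le (dsq_pos c _) (gfun_lower c ⌊t⌋₊ (floor_Icc h.le))

lemma gfun_ge_on (c : ℕ → ℝ) (K : ℕ) {t : ℝ} (ht : t ∈ Set.Icc (0:ℝ) (K:ℝ)) :
    dsq c K ≤ gfun c t := by
  set J := ⌊t⌋₊ with hJ
  have hfloor := floor_Icc ht.1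
  have hJle : J ≤ K := by
    have h := Nat.floor_le_floor (R := ℝ) ht.2
    rwa [Nat.floor_natCast] at h
  rcases eq_or_lt_of_le hJle with he | hl
  · -- then t = K is forced only when J = K and t ≤ K;   t ∈ [K, K]? t ≤ K and t ≥ J = K
    have htK : t = (K:ℝ) := by
      have h1 : (K:ℝ) ≤ t := by rw [← he]; exact hfloor.1
      exact le_antisymm ht.2 h1
    rw [htK]
    rw [gfun_eval c K ⟨le_refl _, by linarith⟩]
    simp
  · calc dsq c K ≤ dsq c (J+1) := dsq_anti c (by omega)
    _ ≤ gfun c t := gfun_lower c J hfloor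

lemma gfun_decay (c : ℕ → ℝ) (n : ℕ) : ∃ M : ℝ, ∀ t : ℝ, 0 ≤ t → t ^ n * gfun c t ≤ M := by
  obtain ⟨Ns, hNs⟩ := rk_tendsto c (2*n)
  refine ⟨((Ns:ℝ)+1) ^ n, fun t ht => ?_⟩
  set K := ⌊t⌋₊ with hK
  have hfloor := floor_Icc ht
  have h1 : t ^ n * gfun c t ≤ ((K:ℝ)+1) ^ n * dsq c K := by
    apply mul_le_mul (pow_le_pow_left₀ ht hfloor.2 n) (gfun_upper c K hfloor)
      (gfun_pos c t).le (by positivity)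
  rcases le_or_gt Ns K with hc | hc
  · have h2 : 2*n ≤ rk c K := hNs K hc
    have h3 : ((K:ℝ)+1) ^ n * dsq c K ≤ 1 := by
      rw [dsq]
      rw [mul_inv_le_iff₀ (by positivity), one_mul]
      apply pow_le_pow_right₀ (by have : (0:ℝ) ≤ (K:ℝ) := Nat.cast_nonneg K; linarith)
      omega
    calc t ^ n * gfun c t ≤ 1 := le_trans h1 h3
    _ ≤ ((Ns:ℝ)+1) ^ n := one_le_pow₀ (by have : (0:ℝ) ≤ (Ns:ℝ) := Nat.cast_nonneg Ns; linarith)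
  · calc t ^ n * gfun c t ≤ ((K:ℝ)+1) ^ n * dsq c K := h1
    _ ≤ ((K:ℝ)+1) ^ n * 1 := mul_le_mul_of_nonneg_left (dsq_le_one c K) (by positivity)
    _ = ((K:ℝ)+1) ^ n := mul_one _
    _ ≤ ((Ns:ℝ)+1) ^ n := by
      apply pow_le_pow_left₀ (by positivity)
      have : (K:ℝ) ≤ (Ns:ℝ) := by exact_mod_cast hc.le
      linarith

lemma gfun_isInF (c : ℕ → ℝ) : IsInF (gfun c) :=
  ⟨gfun_cont c, fun t _ => gfun_pos c t, fun n => (gfun_decay c n).imp (fun M hM => hM)⟩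

-- ### chunk 6 : error series and factorization through `Φ g`
noncomputable def bseq (c : ℕ → ℝ) (n K : ℕ) : ℝ :=
  ((K:ℝ)+1)^n * ((K:ℝ)+2) ^ (rk c K / 2 + 1) * cbar c (rk c K) * (((K:ℝ)) ^ (rk c K))⁻¹

lemma bseq_nonneg (c : ℕ → ℝ) (n K : ℕ) : 0 ≤ bseq c n K := by
  rw [bseq]
  have h1 : (0:ℝ) ≤ cbar c (rk c K) := le_trans zero_le_one (one_le_cbar c _)
  have h2 : (0:ℝ) ≤ (K:ℝ) := Nat.cast_nonneg K
  positivity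

lemma bseq_eventual_le (c : ℕ → ℝ) (n : ℕ) :
    ∃ Kst : ℕ, ∀ K ≥ Kst, bseq c n K ≤ (((K:ℝ))^2)⁻¹ := by
  obtain ⟨N1, hN1⟩ := rk_tendsto c (8*n + 40)
  refine ⟨max (max N1 16) ⌈cbar c 0⌉₊, fun K hK => ?_⟩
  have hK16 : (16:ℝ) ≤ (K:ℝ) := by
    have h : 16 ≤ K := le_trans (le_max_right N1 16) (le_trans (le_max_left _ _) hK)
    exact_mod_cast h
  have hKpos : (0:ℝ) < K := by linarith
  have hK1 : (1:ℝ) ≤ K := by linarith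
  have hcb : cbar c 0 ≤ (K:ℝ) := by
    have h1 : (⌈cbar c 0⌉₊ : ℝ) ≤ K := by
      exact_mod_cast le_trans (le_max_right _ _) hK
    exact le_trans (Nat.le_ceil _) h1
  have hρ : 8*n + 40 ≤ rk c K :=
    hN1 K (le_trans (le_max_left _ _) (le_trans (le_max_left _ _) hK))
  set ρ := rk c K with hρdef
  set q := ρ / 2 with hq
  set e2 := (q + 4) / 4 with he2
  have f1 : ((K:ℝ)+1)^n ≤ (K:ℝ)^(2*n) := by
    have hsq : (K:ℝ) + 1 ≤ (K:ℝ)^2 := by nlinarith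
    calc ((K:ℝ)+1)^n ≤ ((K:ℝ)^2)^n := pow_le_pow_left₀ (by linarith) hsq n
    _ = (K:ℝ)^(2*n) := by rw [← pow_mul, mul_comm]
  have f2 : ((K:ℝ)+2)^(q+1) ≤ (K:ℝ)^e2 * (K:ℝ)^(q+1) := by
    calc ((K:ℝ)+2)^(q+1) ≤ (2*(K:ℝ))^(q+1) :=
          pow_le_pow_left₀ (by linarith) (by linarith) _
    _ = 2^(q+1) * (K:ℝ)^(q+1) := by rw [mul_pow]
    _ ≤ (K:ℝ)^e2 * (K:ℝ)^(q+1) := by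
      apply mul_le_mul_of_nonneg_right _ (by positivity)
      calc (2:ℝ)^(q+1) ≤ (2:ℝ)^(4*e2) := by
            apply pow_le_pow_right₀ (by norm_num)
            omega
      _ = (16:ℝ)^e2 := by rw [pow_mul]; norm_num
      _ ≤ (K:ℝ)^e2 := pow_le_pow_left₀ (by norm_num) hK16 e2
  have f3 : cbar c ρ ≤ (K:ℝ) := le_trans (cbar_rk_le c K) (max_le hcb le_rfl)
  have key : bseq c n K ≤ (K:ℝ)^(2*n + e2 + (q+1) + 1) * ((K:ℝ)^ρ)⁻¹ := by
    rw [bseq]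
    have hinv : (0:ℝ) ≤ ((K:ℝ)^ρ)⁻¹ := by positivity
    apply mul_le_mul_of_nonneg_right _ hinv
    calc ((K:ℝ)+1)^n * ((K:ℝ)+2)^(q+1) * cbar c ρ
        ≤ (K:ℝ)^(2*n) * ((K:ℝ)^e2 * (K:ℝ)^(q+1)) * (K:ℝ) := by
          apply mul_le_mul (mul_le_mul f1 f2 (by positivity) (by positivity)) f3
            (le_trans zero_le_one (one_le_cbar c ρ)) (by positivity)
    _ = (K:ℝ)^(2*n + e2 + (q+1) + 1) := by
          rw [← pow_add, ← pow_add, ← pow_succ]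
          congr 1
          omega
  have hexp : 2*n + e2 + (q+1) + 1 + 2 ≤ ρ := by omega
  calc bseq c n K ≤ (K:ℝ)^(2*n + e2 + (q+1) + 1) * ((K:ℝ)^ρ)⁻¹ := key
  _ ≤ (K:ℝ)^(ρ-2) * ((K:ℝ)^ρ)⁻¹ := by
      apply mul_le_mul_of_nonneg_right _ (by positivity)
      apply pow_le_pow_right₀ hK1
      omega
  _ = ((K:ℝ)^2)⁻¹ := by
      have h9 : (K:ℝ)^ρ = (K:ℝ)^(ρ-2) * (K:ℝ)^2 := by
        rw [← pow_add]
        congr 1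
        omega
      rw [h9, mul_inv, ← mul_assoc, mul_inv_cancel₀ (by positivity), one_mul]

set_option maxHeartbeats 1000000 in
lemma bseq_summable (c : ℕ → ℝ) (n : ℕ) : Summable (bseq c n) := by
  obtain ⟨Kst, hKst⟩ := bseq_eventual_le c n
  have hshift : Summable (fun K : ℕ => (((K + (Kst+1) : ℕ):ℝ)^2)⁻¹) :=
    (summable_nat_add_iff (f := fun m : ℕ => ((m:ℝ)^2)⁻¹) (Kst+1)).2
      (Real.summable_nat_pow_inv.2 (by norm_num : 1 < 2))
  have h2 : Summable (fun K : ℕ => bseq c n (K + (Kst+1))) := by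
    apply Summable.of_nonneg_of_le (fun K => bseq_nonneg c n _) _ hshift
    intro K
    exact hKst (K + (Kst+1)) (by omega)
  exact (summable_nat_add_iff (Kst+1)).1 h2

section Factorization
variable [CompleteSpace 𝓗] {H2 : Op 𝓗} {D : Set 𝓗}

open Filter Topology in
set_option maxHeartbeats 1000000 in
lemma factorization (hsa2 : H2.IsSelfAdjoint) (c2 : FnCalc H2 0) (hD2 : D = H2.Dinf)
    (c : ℕ → ℝ) :
    ∃ g : ℝ → ℝ, IsInF g ∧ ∃ KC : ℝ, 0 < KC ∧
      ∀ ν : ℝ, 0 ≤ ν → ∀ x ∈ D, (∀ r : ℕ, ‖H2.pw r x‖ ≤ c r * ν) →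
        ∃ χ ∈ D, c2.Φ g χ = x ∧ ‖χ‖ ≤ KC * ν := by
  classical
  set g := gfun c with hg
  have hgpos := gfun_pos c
  have hgcont := gfun_cont c
  have hKC : (0:ℝ) < (dsq c 0)⁻¹ * cbar c 0 + (∑' K, bseq c 0 K) + 1 := by
    have h1 : (0:ℝ) < (dsq c 0)⁻¹ := inv_pos.2 (dsq_pos c 0)
    have h2 : (1:ℝ) ≤ cbar c 0 := one_le_cbar c 0
    have h3 : (0:ℝ) ≤ ∑' K, bseq c 0 K := tsum_nonneg (fun K => bseq_nonneg c 0 K)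
    nlinarith
  refine ⟨g, gfun_isInF c, (dsq c 0)⁻¹ * cbar c 0 + (∑' K, bseq c 0 K) + 1, hKC,
    fun ν hν x hx hxr => ?_⟩
  rcases eq_or_lt_of_le hν with hν0 | hνpos
  · -- ν = 0 forces x = 0
    have hx0 : ‖x‖ ≤ 0 := by
      have := hxr 0
      rw [Op.pw_zero_app, ← hν0, mul_zero] at this
      exact this
    have : x = 0 := norm_le_zero_iff.1 hx0
    refine ⟨0, hD2 ▸ H2.dinf_zero_mem, by rw [map_zero, this], by
      rw [norm_zero, ← hν0, mul_zero]⟩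
  have hc_nonneg : ∀ r, 0 ≤ c r := by
    intro r
    have h1 := hxr r
    by_contra hcon
    push_neg at hcon
    nlinarith [norm_nonneg (H2.pw r x)]
  -- cut-off functions
  set v : ℕ → ℝ → ℝ := fun K t =>
    Set.indicator (Set.Icc (0:ℝ) (K:ℝ)) (fun _ => 1) t * (g t)⁻¹ with hvdef
  have hginv_cont : Continuous fun t => (g t)⁻¹ := hgcont.inv₀ (fun t => (hgpos t).ne')
  have hv_meas : ∀ K, Measurable (v K) := fun K =>
    (measurable_const.indicator measurableSet_Icc).mul hginv_cont.measurable
  have hv_bound : ∀ K, ∀ t : ℝ, 0 ≤ t → ∀ m : ℕ,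
      |t ^ m * v K t| ≤ ((K:ℝ))^m * (dsq c K)⁻¹ := by
    intro K t ht m
    by_cases hmem : t ∈ Set.Icc (0:ℝ) (K:ℝ)
    · rw [hvdef]
      simp only [Set.indicator_of_mem hmem]
      rw [one_mul]
      rw [abs_mul, abs_of_nonneg (pow_nonneg ht m), abs_of_nonneg (inv_nonneg.2 (hgpos t).le)]
      apply mul_le_mul (pow_le_pow_left₀ ht hmem.2 m) ?_ (inv_nonneg.2 (hgpos t).le)
        (by positivity)
      exact inv_anti₀ (dsq_pos c K) (gfun_ge_on c K hmem)
    · rw [hvdef]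
      simp only [Set.indicator_of_notMem hmem]
      rw [zero_mul, mul_zero, abs_zero]
      have := (dsq_pos c K).le
      positivity
  have hv_fd : ∀ K, FD (v K) := fun K =>
    ⟨hv_meas K, fun m => ⟨((K:ℝ))^m * (dsq c K)⁻¹, fun t ht => hv_bound K t ht m⟩⟩
  set χ : ℕ → 𝓗 := fun K => c2.Φ (v K) x with hχdef
  have hχD : ∀ K, χ K ∈ H2.Dinf := fun K => phi_mem_dinf c2 (hv_fd K) x
  have hpwχ : ∀ n K, H2.pw n (χ K) = c2.Φ (fun t => t ^ n * v K t) x :=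
    fun n K => (phi_pw c2 (hv_fd K) x n).2
  have hΦgχ : ∀ K, c2.Φ g (χ K) =
      c2.Φ (Set.indicator (Set.Icc (0:ℝ) ((K:ℕ):ℝ)) fun _ => (1:ℝ)) x := by
    intro K
    have h1 := c2.Φ_mul g (v K) hgcont.measurable (hv_meas K)
    have h2 : (fun t => g t * v K t) =
        Set.indicator (Set.Icc (0:ℝ) ((K:ℕ):ℝ)) fun _ => (1:ℝ) := by
      funext t
      rw [hvdef]
      have := (hgpos t).ne'
      by_cases hmem : t ∈ Set.Icc (0:ℝ) (K:ℝ)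
      · simp only [Set.indicator_of_mem hmem]
        field_simp
        exact div_self this
      · simp only [Set.indicator_of_notMem hmem]
        ring
    rw [← h2, h1]
    rfl
  have htend : Tendsto (fun K : ℕ => c2.Φ
      (Set.indicator (Set.Icc (0:ℝ) ((K:ℕ):ℝ)) fun _ => (1:ℝ)) x) atTop (𝓝 x) :=
    (c2.Q_tendsto x).comp tendsto_natCast_atTop_atTop
  -- difference estimates
  have hdiff : ∀ n K, ‖H2.pw n (χ (K+1)) - H2.pw n (χ K)‖ ≤ bseq c n K * ν := by
    intro n K
    have hcast : ((K+1:ℕ):ℝ) = (K:ℝ)+1 := by push_cast; ring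
    set ρ := rk c K with hρdef
    have hKρpos : (0:ℝ) < ((K:ℝ))^ρ := by
      rcases Nat.eq_zero_or_pos K with h0 | hpos
      · subst h0
        have : ρ = 0 := by rw [hρdef]; rfl
        rw [this, pow_zero]; norm_num
      · have : (0:ℝ) < (K:ℝ) := by exact_mod_cast hpos
        positivity
    have hvdiff : ∀ t, v (K+1) t - v K t =
        (Set.indicator (Set.Ioc ((K:ℝ)) ((K:ℝ)+1)) (fun _ => 1) t) * (g t)⁻¹ := by
      intro t
      rw [hvdef]
      simp only [hcast]
      by_cases h1 : t ∈ Set.Icc (0:ℝ) (K:ℝ)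
      · have h2 : t ∈ Set.Icc (0:ℝ) ((K:ℝ)+1) := ⟨h1.1, by linarith [h1.2]⟩
        have h3 : t ∉ Set.Ioc ((K:ℝ)) ((K:ℝ)+1) := fun hc => absurd h1.2 (not_le.2 hc.1)
        rw [Set.indicator_of_mem h2, Set.indicator_of_mem h1, Set.indicator_of_notMem h3]
        ring
      · by_cases h2 : t ∈ Set.Ioc ((K:ℝ)) ((K:ℝ)+1)
        · have h4 : t ∈ Set.Icc (0:ℝ) ((K:ℝ)+1) :=
            ⟨le_trans (Nat.cast_nonneg K) h2.1.le, h2.2⟩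
          rw [Set.indicator_of_mem h4, Set.indicator_of_notMem h1, Set.indicator_of_mem h2]
          ring
        · have h4 : t ∉ Set.Icc (0:ℝ) ((K:ℝ)+1) := by
            intro hc
            rcases le_or_gt t (K:ℝ) with h5 | h5
            · exact h1 ⟨hc.1, h5⟩
            · exact h2 ⟨h5, hc.2⟩
          rw [Set.indicator_of_notMem h4, Set.indicator_of_notMem h1,
            Set.indicator_of_notMem h2]
          ring
    set w : ℝ → ℝ := fun t => t^n * (v (K+1) t - v K t) * ((t:ℝ)^ρ)⁻¹ with hwdef
    have hw_bound : ∀ m : ℕ, ∀ t : ℝ, 0 ≤ t →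
        |t ^ m * w t| ≤ ((K:ℝ)+1)^(m+n) * (dsq c (K+1))⁻¹ * (((K:ℝ))^ρ)⁻¹ := by
      intro m t ht
      by_cases hmem : t ∈ Set.Ioc ((K:ℝ)) ((K:ℝ)+1)
      · rw [hwdef]
        simp only
        rw [hvdiff t, Set.indicator_of_mem hmem, one_mul]
        have hgt : (0:ℝ) < (g t)⁻¹ := inv_pos.2 (hgpos t)
        have htρ : (0:ℝ) < t ^ ρ := by
          have : (0:ℝ) < t := lt_of_le_of_lt (Nat.cast_nonneg K) hmem.1
          positivity
        rw [abs_of_nonneg (by positivity)]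
        have e1 : t ^ m * (t ^ n * (g t)⁻¹ * (t ^ ρ)⁻¹) =
            (t^(m+n)) * (g t)⁻¹ * (t ^ ρ)⁻¹ := by rw [pow_add]; ring
        rw [e1]
        have b1 : t^(m+n) ≤ ((K:ℝ)+1)^(m+n) := pow_le_pow_left₀ ht hmem.2 _
        have b2 : (g t)⁻¹ ≤ (dsq c (K+1))⁻¹ := by
          apply inv_anti₀ (dsq_pos c (K+1))
          apply gfun_ge_on c (K+1)
          rw [hcast]
          exact ⟨ht, hmem.2⟩
        have b3 : (t ^ ρ)⁻¹ ≤ (((K:ℝ))^ρ)⁻¹ := by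
          apply inv_anti₀ hKρpos
          exact pow_le_pow_left₀ (Nat.cast_nonneg K) hmem.1.le ρ
        apply mul_le_mul (mul_le_mul b1 b2 hgt.le (by positivity)) b3 (by positivity)
          (mul_nonneg (by positivity) (inv_pos.2 (dsq_pos c (K+1))).le)
      · rw [hwdef]
        simp only
        rw [hvdiff t, Set.indicator_of_notMem hmem]
        rw [zero_mul, mul_zero, zero_mul, mul_zero, abs_zero]
        have h1 : (0:ℝ) ≤ (dsq c (K+1))⁻¹ := (inv_pos.2 (dsq_pos c (K+1))).le
        apply mul_nonneg (mul_nonneg (by positivity) h1) (by positivity)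
    have hw_meas : Measurable w := by
      rw [hwdef]
      exact ((measurable_id.pow_const n).mul ((hv_meas (K+1)).sub (hv_meas K))).mul
        ((measurable_id.pow_const ρ).inv)
    have hwfd : FD w := ⟨hw_meas, fun m => ⟨_, fun t ht => hw_bound m t ht⟩⟩
    have hshift : (fun t => t^ρ * w t) = (fun t => t^n * (v (K+1) t - v K t)) := by
      funext t
      by_cases h : t ∈ Set.Ioc ((K:ℝ)) ((K:ℝ)+1)
      · have htpos : 0 < t := lt_of_le_of_lt (Nat.cast_nonneg K) h.1
        rw [hwdef]
        have : t ^ ρ ≠ 0 := by positivity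
        field_simp
      · rw [hwdef]
        simp only
        rw [hvdiff t, Set.indicator_of_notMem h]
        ring
    have hsub : H2.pw n (χ (K+1)) - H2.pw n (χ K) =
        c2.Φ (fun t => t^n * (v (K+1) t - v K t)) x := by
      rw [hpwχ, hpwχ]
      have hf : Measurable fun t : ℝ => t ^ n * v (K+1) t :=
        (measurable_id'.pow_const n).mul (hv_meas (K+1))
      have hg' : Measurable fun t : ℝ => t ^ n * v K t :=
        (measurable_id'.pow_const n).mul (hv_meas K)
      rw [← phi_sub c2 hf hg']
      have he9 : (fun t : ℝ => t^n * v (K+1) t - t^n * v K t) =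
          fun t : ℝ => t^n * (v (K+1) t - v K t) := by
        funext t; ring
      rw [he9]
    have hΦw : c2.Φ (fun t => t^n * (v (K+1) t - v K t)) x = c2.Φ w (H2.pw ρ x) := by
      rw [phi_shift c2 hsa2.2.1 hwfd (hD2 ▸ hx) ρ, hshift]
    rw [hsub, hΦw]
    have hMw := c2.Φ_norm w (((K:ℝ)+1)^(0+n) * (dsq c (K+1))⁻¹ * (((K:ℝ))^ρ)⁻¹)
      (fun t ht => by
        have := hw_bound 0 t ht
        rwa [pow_zero, one_mul] at this) (H2.pw ρ x)
    calc ‖c2.Φ w (H2.pw ρ x)‖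
        ≤ ((K:ℝ)+1)^(0+n) * (dsq c (K+1))⁻¹ * (((K:ℝ))^ρ)⁻¹ * ‖H2.pw ρ x‖ := hMw
    _ ≤ ((K:ℝ)+1)^(0+n) * (dsq c (K+1))⁻¹ * (((K:ℝ))^ρ)⁻¹ * (c ρ * ν) := by
        apply mul_le_mul_of_nonneg_left (hxr ρ)
        have h1 : (0:ℝ) ≤ (dsq c (K+1))⁻¹ := (inv_pos.2 (dsq_pos c (K+1))).le
        positivity
    _ = ((K:ℝ)+1)^n * ((dsq c (K+1))⁻¹ * c ρ) * (((K:ℝ))^ρ)⁻¹ * ν := by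
        rw [zero_add]; ring
    _ ≤ ((K:ℝ)+1)^n * (((K:ℝ)+2) ^ (rk c K / 2 + 1) * cbar c ρ) * (((K:ℝ))^ρ)⁻¹ * ν := by
        apply mul_le_mul_of_nonneg_right _ hν
        apply mul_le_mul_of_nonneg_right _ (by positivity)
        apply mul_le_mul_of_nonneg_left _ (by positivity)
        apply mul_le_mul (inv_dsq_succ_le c K) (le_cbar c ρ) (hc_nonneg ρ) (by positivity)
    _ = bseq c n K * ν := by rw [bseq]; ring
  -- limits
  have hCauchy : ∀ n, ∃ y, Tendsto (fun K => H2.pw n (χ K)) atTop (𝓝 y) := by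
    intro n
    have hcs : CauchySeq (fun K => H2.pw n (χ K)) := by
      apply cauchySeq_of_dist_le_of_summable (fun K => bseq c n K * ν) ?_
        ((bseq_summable c n).mul_right ν)
      intro K
      rw [dist_eq_norm, norm_sub_rev]
      exact hdiff n K
    exact cauchySeq_tendsto_of_complete hcs
  choose y hy using hCauchy
  obtain ⟨hy0D, _⟩ := Op.dinf_closed hsa2 (fun K => hχD K) hy
  refine ⟨y 0, hD2 ▸ hy0D, ?_, ?_⟩
  · -- Φ g (y 0) = x
    have h1 : Tendsto (fun K => c2.Φ g (χ K)) atTop (𝓝 (c2.Φ g (y 0))) :=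
      ((c2.Φ g).continuous.tendsto _).comp (hy 0)
    have h2 : Tendsto (fun K => c2.Φ g (χ K)) atTop (𝓝 x) := by
      have he : (fun K : ℕ => c2.Φ g (χ K)) = fun K : ℕ => c2.Φ
          (Set.indicator (Set.Icc (0:ℝ) ((K:ℕ):ℝ)) fun _ => (1:ℝ)) x := funext hΦgχ
      rw [he]
      exact htend
    exact tendsto_nhds_unique h1 h2
  · -- norm bound
    have hd0 : dist (χ 0) (y 0) ≤ ∑' K, (bseq c 0 K * ν) := by
      apply dist_le_tsum_of_dist_le_of_tendsto₀ _ (fun K => ?_)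
        ((bseq_summable c 0).mul_right ν) (hy 0)
      rw [dist_eq_norm, norm_sub_rev]
      exact hdiff 0 K
    have hχ0 : ‖χ 0‖ ≤ (dsq c 0)⁻¹ * (cbar c 0 * ν) := by
      have hb := c2.Φ_norm (v 0) ((dsq c 0)⁻¹) (fun t ht => by
        simpa using hv_bound 0 t ht 0) x
      calc ‖χ 0‖ ≤ (dsq c 0)⁻¹ * ‖x‖ := hb
      _ ≤ (dsq c 0)⁻¹ * (cbar c 0 * ν) := by
          apply mul_le_mul_of_nonneg_left _ (inv_pos.2 (dsq_pos c 0)).le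
          calc ‖x‖ ≤ c 0 * ν := by
                have := hxr 0
                rwa [Op.pw_zero_app] at this
          _ ≤ cbar c 0 * ν := mul_le_mul_of_nonneg_right (le_cbar c 0) hν
    have hy0n : ‖y 0‖ ≤ ‖χ 0‖ + dist (χ 0) (y 0) := by
      rw [dist_eq_norm]
      calc ‖y 0‖ = ‖χ 0 - (χ 0 - y 0)‖ := by congr 1; abel
      _ ≤ ‖χ 0‖ + ‖χ 0 - y 0‖ := norm_sub_le _ _
    have htsum : ∑' K, (bseq c 0 K * ν) = (∑' K, bseq c 0 K) * ν := tsum_mul_right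
    calc ‖y 0‖ ≤ ‖χ 0‖ + dist (χ 0) (y 0) := hy0n
    _ ≤ (dsq c 0)⁻¹ * (cbar c 0 * ν) + (∑' K, bseq c 0 K) * ν := by
        rw [← htsum]
        exact add_le_add hχ0 hd0
    _ ≤ ((dsq c 0)⁻¹ * cbar c 0 + (∑' K, bseq c 0 K) + 1) * ν := by
        have h9 : (0:ℝ) ≤ ν := hν
        nlinarith
end Factorization

-- ### chunk 7 : the one-sided seminorm comparison
section Main
variable [CompleteSpace 𝓗]

open Filter Topology in
set_option maxHeartbeats 2000000 in
lemma oneSide (H1 H2 : Op 𝓗) (hsa1 : H1.IsSelfAdjoint) (hsa2 : H2.IsSelfAdjoint)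
    (c1 : FnCalc H1 0) (c2 : FnCalc H2 0) (D : Set 𝓗)
    (hD1 : D = H1.Dinf) (hD2 : D = H2.Dinf) :
    ∀ f : ℝ → ℝ, IsInF f → ∀ k : ℕ, ∃ C : ℝ, 0 < C ∧ ∃ n : ℕ, ∃ g : Fin n → ℝ → ℝ,
      ∃ j : Fin n → ℕ, (∀ i, IsInF (g i)) ∧ ∀ A : 𝓗 →ₗ[ℂ] 𝓗, MemLdag D A →
        qseminorm c1 D f k A ≤ C * ∑ i, qseminorm c2 D (g i) (j i) A := by
  intro f hf k
  have hdense : Dense D := by rw [hD1]; exact dinf_dense c1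
  have hDs : ∀ (a : ℂ) {ψ : 𝓗}, ψ ∈ D → a • ψ ∈ D := by
    intro a ψ hψ
    rw [hD2] at hψ ⊢
    exact Op.dinf_smul_mem a hψ
  have hxfD : ∀ y : 𝓗, c1.Φ f y ∈ D := fun y => hD1 ▸ phi_mem_dinf c1 (isInF_fd hf) y
  -- the H2-power profile of `Φ₁ f`
  have hprof : ∀ r : ℕ, ∃ cr : ℝ, ∀ φ : 𝓗, ‖H2.pw r (c1.Φ f φ)‖ ≤ cr * ‖φ‖ := by
    intro r
    obtain ⟨N, C, hC, hb⟩ := key_bound hsa2 hsa1 c1 hD2 hD1 r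
    have hMf := fun n => phi_isInF_bound c1 hf n
    choose Mf hMf0 hMfb using hMf
    refine ⟨C * ∑ n ∈ Finset.range (N+1), Mf n, fun φ => ?_⟩
    calc ‖H2.pw r (c1.Φ f φ)‖ ≤ C * ∑ n ∈ Finset.range (N+1), ‖H1.pw n (c1.Φ f φ)‖ :=
          hb _ (hxfD φ)
    _ ≤ C * ∑ n ∈ Finset.range (N+1), Mf n * ‖φ‖ := by
        apply mul_le_mul_of_nonneg_left _ hC.le
        exact Finset.sum_le_sum fun n _ => hMfb n φ
    _ = (C * ∑ n ∈ Finset.range (N+1), Mf n) * ‖φ‖ := by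
        rw [← Finset.sum_mul]; ring
  choose cseq hcseq using hprof
  -- the factorization through Φ₂ g
  obtain ⟨g, hgF, KC, hKC, hfact⟩ := factorization hsa2 c2 hD2 cseq
  -- power comparison H1 ≤ H2
  obtain ⟨N1, C1, hC1, hkey⟩ := key_bound hsa1 hsa2 c2 hD1 hD2 k
  refine ⟨C1 * KC, by positivity, N1 + 1, fun _ => g, fun i => (i : ℕ),
    fun _ => hgF, fun A hA => ?_⟩
  obtain ⟨hAD, Ad, hAdD, hAdrel⟩ := hA
  have hrel' : ∀ x ∈ D, ∀ y ∈ D, ⟪Ad x, y⟫ = ⟪x, A y⟫ := by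
    intro x hx y hy
    have h1 := hAdrel y hy x hx
    calc ⟪Ad x, y⟫ = (starRingEnd ℂ) ⟪y, Ad x⟫ := (inner_conj_symm _ _).symm
    _ = (starRingEnd ℂ) ⟪A y, x⟫ := by rw [h1]
    _ = ⟪x, A y⟫ := inner_conj_symm _ _
  -- uniform bounds for Φ₂g-smoothed operators
  have hgen : ∀ (B Bd : 𝓗 →ₗ[ℂ] 𝓗), (∀ x ∈ D, B x ∈ D) →
      (∀ x ∈ D, ∀ y ∈ D, ⟪B x, y⟫ = ⟪x, Bd y⟫) → ∀ m : ℕ,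
      ∃ CB : ℝ, 0 ≤ CB ∧ ∀ z : 𝓗, ‖H2.pw m (B (c2.Φ g z))‖ ≤ CB * ‖z‖ := by
    intro B Bd hBD hrel m
    obtain ⟨N, C, hC, hb⟩ := ldag_bound hsa2 c2 hD2 B Bd hBD hrel m
    have hMg := fun n => phi_isInF_bound c2 hgF n
    choose Mg hMg0 hMgb using hMg
    refine ⟨C * ∑ n ∈ Finset.range (N+1), Mg n, by
      have : (0:ℝ) ≤ ∑ n ∈ Finset.range (N+1), Mg n :=
        Finset.sum_nonneg fun n _ => hMg0 n
      positivity, fun z => ?_⟩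
    calc ‖H2.pw m (B (c2.Φ g z))‖
        ≤ C * ∑ n ∈ Finset.range (N+1), ‖H2.pw n (c2.Φ g z)‖ :=
          hb _ (hD2 ▸ phi_mem_dinf c2 (isInF_fd hgF) z)
    _ ≤ C * ∑ n ∈ Finset.range (N+1), Mg n * ‖z‖ := by
        apply mul_le_mul_of_nonneg_left _ hC.le
        exact Finset.sum_le_sum fun n _ => hMgb n z
    _ = (C * ∑ n ∈ Finset.range (N+1), Mg n) * ‖z‖ := by
        rw [← Finset.sum_mul]; ring
  obtain hgenA := hgen A Ad hAD hAdrel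
  obtain hgenAd := hgen Ad A hAdD hrel'
  choose CA hCA0 hCAb using hgenA
  choose CAd hCAd0 hCAdb using hgenAd
  -- linearity of smoothed maps
  have hlinB : ∀ (B : 𝓗 →ₗ[ℂ] 𝓗) (m : ℕ) (a : ℂ) (z : 𝓗),
      H2.pw m (B (c2.Φ g (a • z))) = a • H2.pw m (B (c2.Φ g z)) := by
    intro B m a z
    rw [map_smul (c2.Φ g), map_smul B, Op.pw_smul]
  -- the chain estimate
  have hchain2 : ∀ (B : 𝓗 →ₗ[ℂ] 𝓗) (CB : ℕ → ℝ), (∀ x ∈ D, B x ∈ D) →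
      (∀ m, 0 ≤ CB m) →
      (∀ m : ℕ, ∀ z : 𝓗, ‖H2.pw m (B (c2.Φ g z))‖ ≤ CB m * ‖z‖) →
      ∀ y : 𝓗, ‖H1.pw k (B (c1.Φ f y))‖ ≤
        C1 * ∑ m ∈ Finset.range (N1+1),
          opNormOn D (fun z => H2.pw m (B (c2.Φ g z))) * (KC * ‖y‖) := by
    intro B CB hBD hCB0 hCB y
    obtain ⟨χ, hχD, hχeq, hχn⟩ := hfact ‖y‖ (norm_nonneg y) (c1.Φ f y) (hxfD y)
      (fun r => hcseq r y)
    have hBxD : B (c1.Φ f y) ∈ D := hBD _ (hxfD y)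
    calc ‖H1.pw k (B (c1.Φ f y))‖
        ≤ C1 * ∑ m ∈ Finset.range (N1+1), ‖H2.pw m (B (c1.Φ f y))‖ := hkey _ hBxD
    _ ≤ C1 * ∑ m ∈ Finset.range (N1+1),
          opNormOn D (fun z => H2.pw m (B (c2.Φ g z))) * (KC * ‖y‖) := by
        apply mul_le_mul_of_nonneg_left _ hC1.le
        refine Finset.sum_le_sum fun m _ => ?_
        have h1 : ‖H2.pw m (B (c1.Φ f y))‖
            = ‖(fun z => H2.pw m (B (c2.Φ g z))) χ‖ := by rw [← hχeq]
        rw [h1]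
        calc ‖(fun z => H2.pw m (B (c2.Φ g z))) χ‖
            ≤ opNormOn D (fun z => H2.pw m (B (c2.Φ g z))) * ‖χ‖ := by
              apply norm_le_opNormOn_mul D _ hDs (hlinB B m)
                (M := CB m) (fun ψ _ hψ1 => by
                  calc ‖H2.pw m (B (c2.Φ g ψ))‖ ≤ CB m * ‖ψ‖ := hCB m ψ
                  _ ≤ CB m * 1 := mul_le_mul_of_nonneg_left hψ1 (hCB0 m)
                  _ = CB m := mul_one _) hχD
        _ ≤ opNormOn D (fun z => H2.pw m (B (c2.Φ g z))) * (KC * ‖y‖) :=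
              mul_le_mul_of_nonneg_left hχn (opNormOn_nonneg _ _)
  have hADg : ∀ y : 𝓗, c2.Φ g y ∈ D := fun y => hD2 ▸ phi_mem_dinf c2 (isInF_fd hgF) y
  -- pointwise bound for the second component maps
  have hflipPoint : ∀ m : ℕ, ∀ ψ : 𝓗, ψ ∈ D →
      ‖c2.Φ g (A (H2.pw m ψ))‖ ≤ CAd m * ‖ψ‖ := by
    intro m ψ hψ
    refine norm_le_of_inner' hdense (mul_nonneg (hCAd0 m) (norm_nonneg ψ)) fun y hy => ?_
    have hstep : ⟪c2.Φ g (A (H2.pw m ψ)), y⟫ = ⟪ψ, H2.pw m (Ad (c2.Φ g y))⟫ := by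
      calc ⟪c2.Φ g (A (H2.pw m ψ)), y⟫ = ⟪A (H2.pw m ψ), c2.Φ g y⟫ := c2.Φ_symm g _ y
      _ = ⟪H2.pw m ψ, Ad (c2.Φ g y)⟫ :=
          hAdrel _ (hD2 ▸ Op.dinf_pw_mem (hD2 ▸ hψ) m) _ (hADg y)
      _ = ⟪ψ, H2.pw m (Ad (c2.Φ g y))⟫ :=
          Op.symm_pw hsa2.2.1 (hD2 ▸ hψ) (hD2 ▸ hAdD _ (hADg y)) m
    rw [hstep]
    calc ‖⟪ψ, H2.pw m (Ad (c2.Φ g y))⟫‖ ≤ ‖ψ‖ * ‖H2.pw m (Ad (c2.Φ g y))‖ :=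
          norm_inner_le_norm _ _
    _ ≤ ‖ψ‖ * (CAd m * ‖y‖) := mul_le_mul_of_nonneg_left (hCAdb m y) (norm_nonneg ψ)
    _ = (CAd m * ‖ψ‖) * ‖y‖ := by ring
  have hlin2 : ∀ (m : ℕ) (a : ℂ) (ψ : 𝓗),
      c2.Φ g (A (H2.pw m (a • ψ))) = a • c2.Φ g (A (H2.pw m ψ)) := by
    intro m a ψ
    rw [Op.pw_smul, map_smul A, map_smul (c2.Φ g)]
  -- comp1 of Ad is dominated by comp2 of A
  have hAdComp1_le : ∀ m : ℕ, ∀ z : 𝓗, z ∈ D → ‖z‖ ≤ 1 →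
      ‖H2.pw m (Ad (c2.Φ g z))‖ ≤ opNormOn D (fun ψ => c2.Φ g (A (H2.pw m ψ))) := by
    intro m z hz hz1
    refine norm_le_of_inner' hdense (opNormOn_nonneg _ _) fun y' hy' => ?_
    have hstep : ⟪H2.pw m (Ad (c2.Φ g z)), y'⟫ = ⟪z, c2.Φ g (A (H2.pw m y'))⟫ := by
      calc ⟪H2.pw m (Ad (c2.Φ g z)), y'⟫ = ⟪Ad (c2.Φ g z), H2.pw m y'⟫ :=
            Op.symm_pw hsa2.2.1 (hD2 ▸ hAdD _ (hADg z)) (hD2 ▸ hy') m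
      _ = ⟪c2.Φ g z, A (H2.pw m y')⟫ :=
            hrel' _ (hADg z) _ (hD2 ▸ Op.dinf_pw_mem (hD2 ▸ hy') m)
      _ = ⟪z, c2.Φ g (A (H2.pw m y'))⟫ := c2.Φ_symm g z _
    rw [hstep]
    calc ‖⟪z, c2.Φ g (A (H2.pw m y'))⟫‖ ≤ ‖z‖ * ‖c2.Φ g (A (H2.pw m y'))‖ :=
          norm_inner_le_norm _ _
    _ ≤ 1 * (opNormOn D (fun ψ => c2.Φ g (A (H2.pw m ψ))) * ‖y'‖) := by
        apply mul_le_mul hz1 ?_ (norm_nonneg _) (by norm_num)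
        apply norm_le_opNormOn_mul D _ hDs (hlin2 m) (M := CAd m)
          (fun ψ hψ hψ1 => by
            calc ‖c2.Φ g (A (H2.pw m ψ))‖ ≤ CAd m * ‖ψ‖ := hflipPoint m ψ hψ
            _ ≤ CAd m * 1 := mul_le_mul_of_nonneg_left hψ1 (hCAd0 m)
            _ = CAd m := mul_one _) hy'
    _ = opNormOn D (fun ψ => c2.Φ g (A (H2.pw m ψ))) * ‖y'‖ := one_mul _
  -- the right-hand side
  set RHS : ℝ := ∑ i : Fin (N1+1), qseminorm c2 D g (i:ℕ) A with hRHSdef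
  have hRHSr : RHS = ∑ m ∈ Finset.range (N1+1), qseminorm c2 D g m A := by
    rw [hRHSdef]
    exact Fin.sum_univ_eq_sum_range (fun m => qseminorm c2 D g m A) (N1+1)
  have hRHS0 : 0 ≤ RHS := by
    rw [hRHSdef]
    exact Finset.sum_nonneg fun i _ => qseminorm_nonneg c2 D g _ A
  have hgoal0 : 0 ≤ C1 * KC * RHS := by positivity
  -- first component
  have hT1 : opNormOn D (fun φ => H1.pw k (A (c1.Φ f φ))) ≤ C1 * KC * RHS := by
    apply opNormOn_le _ _ hgoal0
    intro φ hφ hφ1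
    calc ‖H1.pw k (A (c1.Φ f φ))‖
        ≤ C1 * ∑ m ∈ Finset.range (N1+1),
            opNormOn D (fun z => H2.pw m (A (c2.Φ g z))) * (KC * ‖φ‖) :=
          hchain2 A CA hAD hCA0 hCAb φ
    _ ≤ C1 * ∑ m ∈ Finset.range (N1+1), qseminorm c2 D g m A * (KC * 1) := by
        apply mul_le_mul_of_nonneg_left _ hC1.le
        refine Finset.sum_le_sum fun m _ => ?_
        apply mul_le_mul (le_max_left _ _)
          (mul_le_mul_of_nonneg_left hφ1 hKC.le)
          (by positivity) (qseminorm_nonneg c2 D g m A)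
    _ = C1 * KC * RHS := by
        rw [hRHSr]
        simp only [Finset.mul_sum, Finset.sum_mul]
        exact Finset.sum_congr rfl fun m _ => by ring
  -- second component
  have hT2 : opNormOn D (fun φ => c1.Φ f (A (H1.pw k φ))) ≤ C1 * KC * RHS := by
    apply opNormOn_le _ _ hgoal0
    intro φ hφ hφ1
    refine norm_le_of_inner' hdense hgoal0 fun y hy => ?_
    have hstep : ⟪c1.Φ f (A (H1.pw k φ)), y⟫ = ⟪φ, H1.pw k (Ad (c1.Φ f y))⟫ := by
      calc ⟪c1.Φ f (A (H1.pw k φ)), y⟫ = ⟪A (H1.pw k φ), c1.Φ f y⟫ := c1.Φ_symm f _ y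
      _ = ⟪H1.pw k φ, Ad (c1.Φ f y)⟫ :=
          hAdrel _ (hD1 ▸ Op.dinf_pw_mem (hD1 ▸ hφ) k) _ (hxfD y)
      _ = ⟪φ, H1.pw k (Ad (c1.Φ f y))⟫ :=
          Op.symm_pw hsa1.2.1 (hD1 ▸ hφ) (hD1 ▸ hAdD _ (hxfD y)) k
    rw [hstep]
    calc ‖⟪φ, H1.pw k (Ad (c1.Φ f y))⟫‖ ≤ ‖φ‖ * ‖H1.pw k (Ad (c1.Φ f y))‖ :=
          norm_inner_le_norm _ _
    _ ≤ 1 * (C1 * ∑ m ∈ Finset.range (N1+1),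
          opNormOn D (fun z => H2.pw m (Ad (c2.Φ g z))) * (KC * ‖y‖)) :=
        mul_le_mul hφ1 (hchain2 Ad CAd hAdD hCAd0 hCAdb y) (norm_nonneg _) (by norm_num)
    _ ≤ 1 * (C1 * ∑ m ∈ Finset.range (N1+1), qseminorm c2 D g m A * (KC * ‖y‖)) := by
        apply mul_le_mul_of_nonneg_left _ (by norm_num)
        apply mul_le_mul_of_nonneg_left _ hC1.le
        refine Finset.sum_le_sum fun m _ => ?_
        apply mul_le_mul_of_nonneg_right _ (by positivity)
        calc opNormOn D (fun z => H2.pw m (Ad (c2.Φ g z)))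
            ≤ opNormOn D (fun ψ => c2.Φ g (A (H2.pw m ψ))) :=
              opNormOn_le _ _ (opNormOn_nonneg _ _) (hAdComp1_le m)
        _ ≤ qseminorm c2 D g m A := le_max_right _ _
    _ = C1 * KC * RHS * ‖y‖ := by
        rw [hRHSr, one_mul]
        simp only [Finset.mul_sum, Finset.sum_mul]
        exact Finset.sum_congr rfl fun m _ => by ring
  exact max_le hT1 hT2


end Main

variable {𝓗 : Type*} [NormedAddCommGroup 𝓗] [InnerProductSpace ℂ 𝓗] [CompleteSpace 𝓗]

/-- Under the assumptions `H = H0 + B` self-adjoint on `D(H0)` and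
`D = D^∞(H0) = D^∞(H)`, the locally convex topologies on `L†(D)` defined by the two
families of seminorms `A ↦ max{‖H0^k A f(H0)‖, ‖f(H0) A H0^k‖}` and
`A ↦ max{‖H^k A f(H)‖, ‖f(H) A H^k‖}` (`f ∈ F`, `k ∈ ℕ`) are equivalent; equivalence is
expressed by the standard mutual-domination criterion: every seminorm of one family is
bounded by a constant times a finite sum of seminorms of the other family. -/
theorem stmt3 (H0 B : Op 𝓗) (hsa0 : H0.IsSelfAdjoint)
    (hBsymm : B.Symmetric) (hdomB : (H0.dom : Set 𝓗) ⊆ B.dom)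
    (hsaH : (H0.pert B).IsSelfAdjoint)
    (S0 : FnCalc H0 0) (SH : FnCalc (H0.pert B) 0)
    (D : Set 𝓗) (hD0 : D = H0.Dinf) (hDH : D = (H0.pert B).Dinf) :
    (∀ f : ℝ → ℝ, IsInF f → ∀ k : ℕ, ∃ C : ℝ, 0 < C ∧ ∃ n : ℕ, ∃ g : Fin n → ℝ → ℝ,
      ∃ j : Fin n → ℕ, (∀ i, IsInF (g i)) ∧ ∀ A : 𝓗 →ₗ[ℂ] 𝓗, MemLdag D A →
        qseminorm S0 D f k A ≤ C * ∑ i, qseminorm SH D (g i) (j i) A) ∧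
    (∀ f : ℝ → ℝ, IsInF f → ∀ k : ℕ, ∃ C : ℝ, 0 < C ∧ ∃ n : ℕ, ∃ g : Fin n → ℝ → ℝ,
      ∃ j : Fin n → ℕ, (∀ i, IsInF (g i)) ∧ ∀ A : 𝓗 →ₗ[ℂ] 𝓗, MemLdag D A →
        qseminorm SH D f k A ≤ C * ∑ i, qseminorm S0 D (g i) (j i) A) :=
  ⟨oneSide H0 (H0.pert B) hsa0 hsaH S0 SH D hD0 hDH,
   oneSide (H0.pert B) H0 hsaH hsa0 SH S0 D hDH hD0⟩

end Paper
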